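/- arXiv:1103.6069 — 9 statements merged into one kernel-verified Lean document; each statement's English description precedes it below -/
import Mathlib

section
/- Let G be a finite transitive permutation group with point stabiliser H, let T be a normal subgroup of G, and let g ∈ G. If a positive integer k divides |T ∩ H : T ∩ H ∩ H^g|, then k divides |H : H ∩ H^g|. -/
open Subgroup

/-- In a finite group, if `N` is normal then `[N : N ⊓ K]` divides `[Γ : K]`. -/
lemma relIndex_dvd_index_of_normal_right {Γ : Type*} [Group Γ] [Finite Γ]
    (K N : Subgroup Γ) [N.Normal] : K.relIndex N ∣ K.index := by
  have h1 : K.relIndex N * N.index = (K ⊓ N).index := by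
    rw [← inf_relIndex_right K N]; exact relIndex_mul_index inf_le_right
  have h2 : N.relIndex K * K.index = (K ⊓ N).index := by
    rw [← inf_relIndex_right N K, inf_comm N K]; exact relIndex_mul_index inf_le_left
  obtain ⟨m, hm⟩ : N.relIndex K ∣ N.index := relIndex_dvd_index_of_normal N K
  have hb : 0 < N.relIndex K := Nat.pos_of_ne_zero (N.subgroupOf K).index_ne_zero_of_finite
  refine ⟨m, ?_⟩
  refine (Nat.eq_of_mul_eq_mul_left hb ?_).symm
  calc N.relIndex K * (K.relIndex N * m)
      = K.relIndex N * (N.relIndex K * m) := by ring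
    _ = K.relIndex N * N.index := by rw [hm]
    _ = N.relIndex K * K.index := by rw [h1, h2]

/-- The conjugate subgroup `H^g = g⁻¹ H g`. -/
def conjSubgroup {G : Type*} [Group G] (g : G) (H : Subgroup G) : Subgroup G :=
  H.map (MulAut.conj g⁻¹).toMonoidHom

/-- Let `G` be a finite transitive permutation group with point stabiliser `H`,
`T` a normal subgroup of `G`, and `g ∈ G`.  If `k > 0` divides
`|T ∩ H : T ∩ H ∩ H^g|`, then `k` divides `|H : H ∩ H^g|`. -/
theorem stmt2 {G Ω : Type*} [Group G] [Finite G] [Finite Ω] [MulAction G Ω]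
    [FaithfulSMul G Ω] (htrans : MulAction.IsPretransitive G Ω) (α : Ω)
    (T : Subgroup G) (hT : T.Normal) (g : G) (k : ℕ) (hk : 0 < k)
    (hdvd : k ∣ Subgroup.relIndex (conjSubgroup g (MulAction.stabilizer G α))
      (T ⊓ MulAction.stabilizer G α)) :
    k ∣ Subgroup.relIndex (conjSubgroup g (MulAction.stabilizer G α))
      (MulAction.stabilizer G α) := by
  set H := MulAction.stabilizer G α
  set K := conjSubgroup g H
  haveI : (T.subgroupOf H).Normal := hT.subgroupOf H
  have key : (K.subgroupOf H).relIndex (T.subgroupOf H) ∣ (K.subgroupOf H).index :=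
    relIndex_dvd_index_of_normal_right _ _
  have h1 : (K.subgroupOf H).relIndex (T.subgroupOf H) = K.relIndex (T ⊓ H) := by
    rw [← inf_subgroupOf_right T H]
    exact relIndex_subgroupOf inf_le_right
  rw [h1] at key
  exact dvd_trans hdvd key
end

section
/- Let G be a finite transitive permutation group on Ω with point stabiliser H, and let p be a prime such that H has a nontrivial normal p-subgroup P. Then G has a subdegree divisible by p. -/
/-- Let `G` be a finite transitive permutation group on `Ω` with point stabiliser
`H = G_α`, and `p` a prime such that `H` has a nontrivial normal `p`-subgroup `P`.
Then `G` has a subdegree divisible by `p`. -/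
theorem stmt3 {G Ω : Type*} [Group G] [Finite G] [Finite Ω] [MulAction G Ω]
    [FaithfulSMul G Ω] (htrans : MulAction.IsPretransitive G Ω) (α : Ω)
    (p : ℕ) (hp : p.Prime) (P : Subgroup G)
    (hPle : P ≤ MulAction.stabilizer G α) (hPbot : P ≠ ⊥)
    (hPnorm : (P.subgroupOf (MulAction.stabilizer G α)).Normal)
    (hPp : IsPGroup p P) :
    ∃ β : Ω, p ∣ Nat.card (MulAction.orbit (MulAction.stabilizer G α) β) := by
  by_contra hcon
  push_neg at hcon
  set H := MulAction.stabilizer G α with hH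
  set Q := P.subgroupOf H with hQ
  have hQp : IsPGroup p Q := hPp.of_equiv (Subgroup.subgroupOfEquivOfLe hPle).symm
  have hfact : Fact p.Prime := ⟨hp⟩
  -- P fixes every point
  have hfix : ∀ β : Ω, ∀ x ∈ P, x • β = β := by
    intro β x hx
    obtain ⟨⟨γ, hγorb⟩, hγfix⟩ :=
      hQp.nonempty_fixed_point_of_prime_not_dvd_card (MulAction.orbit H β) (hcon β)
    obtain ⟨h, rfl⟩ := hγorb
    have hx' : (⟨x, hPle hx⟩ : H) ∈ Q := by
      simpa [hQ, Subgroup.mem_subgroupOf] using hx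
    have hconj : h * ⟨x, hPle hx⟩ * h⁻¹ ∈ Q := hPnorm.conj_mem _ hx' h
    have key := hγfix ⟨h * ⟨x, hPle hx⟩ * h⁻¹, hconj⟩
    have key' : ((h * ⟨x, hPle hx⟩ * h⁻¹ : H) : G) • ((h : G) • β) = (h : G) • β :=
      congrArg Subtype.val key
    have key'' : ((h : G) * x * (h : G)⁻¹) • ((h : G) • β) = (h : G) • β := key'
    have h1 : (h : G) • (x • β) = (h : G) • β := by
      simpa [smul_smul, mul_assoc] using key''
    exact smul_left_cancel _ h1
  -- hence P = ⊥
  apply hPbot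
  rw [Subgroup.eq_bot_iff_forall]
  intro x hx
  apply FaithfulSMul.eq_of_smul_eq_smul (α := Ω)
  intro β
  simpa using hfix β x hx
end

section
/- Let G be a finite transitive permutation group with point stabiliser H, let p be a prime, and suppose there exists a subgroup T ≤ H such that: (i) N_G(T) is not contained in H; and (ii) for every Sylow p-subgroup S of H, the subgroup ⟨T, S⟩ contains a normal subgroup H₀ of H which is weakly closed in G (meaning: whenever H₀^g ≤ H for g ∈ G, there exists h ∈ H with H₀^g = H₀^h) and satisfies H = N_G(H₀). Then G has a subdegree divisible by p. -/
/-- `S` is a Sylow `p`-subgroup of the subgroup `H` of `G`. -/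
def IsSylowIn {G : Type*} [Group G] (p : ℕ) (S H : Subgroup G) : Prop :=
  S ≤ H ∧ IsPGroup p S ∧ ∀ Q : Subgroup G, Q ≤ H → IsPGroup p Q → S ≤ Q → Q = S

/-- `H₀ ≤ H` is weakly closed in `G` (relative to `H`): every `G`-conjugate of `H₀`
contained in `H` is an `H`-conjugate of `H₀`. -/
def IsWeaklyClosedIn {G : Type*} [Group G] (H₀ H : Subgroup G) : Prop :=
  ∀ g : G, conjSubgroup g H₀ ≤ H → ∃ h ∈ H, conjSubgroup g H₀ = conjSubgroup h H₀

lemma mem_conjSubgroup {G : Type*} [Group G] {g x : G} {H : Subgroup G} :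
    x ∈ conjSubgroup g H ↔ g * x * g⁻¹ ∈ H := by
  simp only [conjSubgroup, Subgroup.mem_map, MulEquiv.coe_toMonoidHom, MulAut.conj_apply]
  constructor
  · rintro ⟨y, hy, rfl⟩
    simpa [mul_assoc] using hy
  · intro h
    exact ⟨g * x * g⁻¹, h, by group⟩

lemma conjSubgroup_eq_self_of_mem_normalizer {G : Type*} [Group G] {g : G} {H : Subgroup G}
    (hg : g ∈ Subgroup.normalizer (H : Set G)) : conjSubgroup g H = H := by
  ext x
  rw [mem_conjSubgroup]
  exact (Subgroup.mem_normalizer_iff.mp hg x).symm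

lemma mem_normalizer_of_conjSubgroup_eq_self {G : Type*} [Group G] {g : G} {H : Subgroup G}
    (h : conjSubgroup g H = H) : g ∈ Subgroup.normalizer (H : Set G) := by
  rw [Subgroup.mem_normalizer_iff]
  intro n
  have := Subgroup.ext_iff.mp h n
  rw [mem_conjSubgroup] at this
  exact this.symm

/-- Lemma 2.2 of the paper: a criterion for a transitive group to have a subdegree
divisible by the prime `p`. -/
theorem stmt4 {G Ω : Type*} [Group G] [Finite G] [Finite Ω] [MulAction G Ω]
    [FaithfulSMul G Ω] (htrans : MulAction.IsPretransitive G Ω) (α : Ω)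
    (p : ℕ) (hp : p.Prime) (T : Subgroup G) (hTH : T ≤ MulAction.stabilizer G α)
    (hnorm : ¬ Subgroup.normalizer (T : Set G) ≤ MulAction.stabilizer G α)
    (hS : ∀ S : Subgroup G, IsSylowIn p S (MulAction.stabilizer G α) →
      ∃ H₀ : Subgroup G, H₀ ≤ T ⊔ S ∧
        (H₀.subgroupOf (MulAction.stabilizer G α)).Normal ∧
        IsWeaklyClosedIn H₀ (MulAction.stabilizer G α) ∧
        Subgroup.normalizer (H₀ : Set G) = MulAction.stabilizer G α) :
    ∃ β : Ω, p ∣ Nat.card (MulAction.orbit (MulAction.stabilizer G α) β) := by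
  by_contra hcon
  push_neg at hcon
  set H := MulAction.stabilizer G α with hHdef
  -- pick g normalizing T but outside H
  rw [SetLike.le_def] at hnorm
  push_neg at hnorm
  obtain ⟨g, hgN, hgH⟩ := hnorm
  set K := conjSubgroup g H with hKdef
  set β := g⁻¹ • α with hβdef
  have hKstab : MulAction.stabilizer G β = K := by
    rw [hβdef, MulAction.stabilizer_smul_eq_stabilizer_map_conj]
    rfl
  -- T ≤ K
  have hTK : T ≤ K := by
    intro x hx
    rw [hKdef, mem_conjSubgroup]
    exact hTH ((Subgroup.mem_normalizer_iff.mp hgN x).mp hx)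
  -- the stabilizer of β inside H
  set N : Subgroup H := K.subgroupOf H with hNdef
  have hstabH : MulAction.stabilizer H β = N := by
    rw [hNdef, ← hKstab]
    ext
    rfl
  -- p does not divide the index of N in H
  have hpN : ¬ p ∣ N.index := by
    have horb := MulAction.index_stabilizer H β
    rw [hstabH] at horb
    rw [horb, ← Nat.card_coe_set_eq]
    exact hcon β
  haveI : Fact p.Prime := ⟨hp⟩
  -- a Sylow p-subgroup of N, pushed to G
  obtain ⟨S₁⟩ : Nonempty (Sylow p N) := inferInstance
  set S : Subgroup G := ((S₁ : Subgroup N).map N.subtype).map H.subtype with hSdef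
  have hcardS : Nat.card S = Nat.card (S₁ : Subgroup N) := by
    rw [hSdef]
    refine (Nat.card_congr ?_).symm
    exact ((Subgroup.equivMapOfInjective _ _ N.subtype_injective).trans
      (Subgroup.equivMapOfInjective _ _ H.subtype_injective)).toEquiv
  have hScard : Nat.card S = p ^ (Nat.card N).factorization p := by
    rw [hcardS]
    exact S₁.card_eq_multiplicity
  have hSK : S ≤ K ⊓ H := by
    rw [hSdef]
    calc ((S₁ : Subgroup N).map N.subtype).map H.subtype
        ≤ N.map H.subtype := Subgroup.map_mono (Subgroup.map_subtype_le _)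
      _ = K ⊓ H := by rw [hNdef]; exact Subgroup.subgroupOf_map_subtype K H
  have hSH : S ≤ H := hSK.trans inf_le_right
  -- S is a Sylow p-subgroup of H
  have hSyl : IsSylowIn p S H := by
    refine ⟨hSH, ?_, ?_⟩
    · rw [hSdef]
      exact ((S₁.isPGroup'.map _).map _)
    · intro Q hQH hQp hSQ
      obtain ⟨k, hk⟩ := IsPGroup.iff_card.mp hQp
      have hQdvd : Nat.card Q ∣ Nat.card H := Subgroup.card_dvd_of_le hQH
      rw [← Subgroup.card_mul_index (H := N)] at hQdvd
      have hcop : Nat.Coprime (Nat.card Q) N.index := by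
        rw [hk]
        exact Nat.Coprime.pow_left _ (hp.coprime_iff_not_dvd.mpr hpN)
      have hdvdN : Nat.card Q ∣ Nat.card N := hcop.dvd_of_dvd_mul_right hQdvd
      have hNne : Nat.card N ≠ 0 := Nat.card_pos.ne'
      have hQS : Nat.card Q ∣ Nat.card S := by
        rw [hScard, hk]
        exact pow_dvd_pow p ((Nat.Prime.pow_dvd_iff_le_factorization hp hNne).mp (hk ▸ hdvdN))
      have hSQcard : Nat.card S = Nat.card Q :=
        Nat.dvd_antisymm (Subgroup.card_dvd_of_le hSQ) hQS
      have htop : S.subgroupOf Q = ⊤ := by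
        apply (Subgroup.card_eq_iff_eq_top _).mp
        rw [Nat.card_congr (Subgroup.subgroupOfEquivOfLe hSQ).toEquiv, hSQcard]
      exact le_antisymm (Subgroup.subgroupOf_eq_top.mp htop) hSQ
  -- apply the hypothesis
  obtain ⟨H₀, hH₀TS, _, hwc, hNH₀⟩ := hS S hSyl
  have hH₀K : H₀ ≤ K := hH₀TS.trans (sup_le hTK (hSK.trans inf_le_left))
  have hconj : conjSubgroup g⁻¹ H₀ ≤ H := by
    intro x hx
    rw [mem_conjSubgroup] at hx
    have := hH₀K hx
    rw [hKdef, mem_conjSubgroup] at this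
    simpa [mul_assoc] using this
  obtain ⟨h, hh, heq⟩ := hwc g⁻¹ hconj
  have hhn : h ∈ Subgroup.normalizer (H₀ : Set G) := hNH₀ ▸ hh
  rw [conjSubgroup_eq_self_of_mem_normalizer hhn] at heq
  have : g⁻¹ ∈ Subgroup.normalizer (H₀ : Set G) := mem_normalizer_of_conjSubgroup_eq_self heq
  exact hgH (hNH₀ ▸ ((Subgroup.normalizer (H₀ : Set G)).inv_mem_iff.mp this))
end

section
/- Let T be a finite nonabelian simple group and p a prime dividing |T|. Then T has a conjugacy class of size divisible by p. -/
open MulAction Subgroup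

/-- Jordan: a finite transitive group on a set of size ≥ 2 has a fixed-point-free element. -/
lemma jordan_aux {G X : Type*} [Group G] [Fintype G] [Fintype X] [MulAction G X]
    [MulAction.IsPretransitive G X] (hX : 1 < Fintype.card X) :
    ∃ g : G, ∀ a : X, g • a ≠ a := by
  classical
  by_contra h
  push_neg at h
  have hne : Nonempty X := Fintype.card_pos_iff.mp (by omega)
  have hΩsub : Subsingleton (MulAction.orbitRel.Quotient G X) :=
    (MulAction.pretransitive_iff_subsingleton_quotient G X).mp inferInstance
  have hΩ : Fintype.card (Quotient (MulAction.orbitRel G X)) = 1 := by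
    have : Nonempty (Quotient (MulAction.orbitRel G X)) :=
      ⟨Quotient.mk'' (Classical.arbitrary X)⟩
    exact le_antisymm (Fintype.card_le_one_iff_subsingleton.mpr hΩsub)
      Fintype.card_pos
  have hb := MulAction.sum_card_fixedBy_eq_card_orbits_mul_card_group G X
  rw [hΩ, one_mul] at hb
  -- lower bound the sum
  have h1 : Fintype.card (MulAction.fixedBy X (1 : G)) = Fintype.card X := by
    apply Fintype.card_congr
    apply Equiv.subtypeUnivEquiv
    intro a; simp [MulAction.mem_fixedBy]
  have hge : ∀ g : G, 1 ≤ Fintype.card (MulAction.fixedBy X g) := by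
    intro g
    obtain ⟨a, ha⟩ := h g
    exact Fintype.card_pos_iff.mpr ⟨⟨a, ha⟩⟩
  have hlow : (Finset.univ.erase (1 : G)).card + Fintype.card X ≤
      ∑ g : G, Fintype.card (MulAction.fixedBy X g) := by
    calc (Finset.univ.erase (1 : G)).card + Fintype.card X
        = (∑ _g ∈ Finset.univ.erase (1 : G), 1)
            + Fintype.card (MulAction.fixedBy X (1 : G)) := by
          rw [Finset.sum_const, smul_eq_mul, mul_one, h1]
      _ ≤ (∑ g ∈ Finset.univ.erase (1 : G), Fintype.card (MulAction.fixedBy X g))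
            + Fintype.card (MulAction.fixedBy X (1 : G)) := by
          gcongr with g hg; exact hge g
      _ = ∑ g : G, Fintype.card (MulAction.fixedBy X g) :=
          Finset.sum_erase_add _ _ (Finset.mem_univ 1)
  rw [hb, Finset.card_erase_of_mem (Finset.mem_univ _), Finset.card_univ] at hlow
  have : 0 < Fintype.card G := Fintype.card_pos
  omega

/-- Lemma 3.3: a finite nonabelian simple group `T` has, for every prime `p`
dividing `|T|`, a conjugacy class of size divisible by `p`. -/
theorem stmt7 {T : Type*} [Group T] [Finite T] [IsSimpleGroup T]
    (hna : ∃ a b : T, a * b ≠ b * a) (p : ℕ) (hp : p.Prime)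
    (hdvd : p ∣ Nat.card T) :
    ∃ t : T, p ∣ Nat.card (conjugatesOf t) := by
  classical
  have : Fact p.Prime := ⟨hp⟩
  cases nonempty_fintype T
  by_contra hcon
  push_neg at hcon
  obtain ⟨P⟩ : Nonempty (Sylow p T) := inferInstance
  set H := Subgroup.centralizer (P : Set T) with hH
  -- every element has a conjugate in H
  have cover : ∀ t : T, ∃ g : T, g⁻¹ * t * g ∈ H := by
    intro t
    set C := Subgroup.centralizer ({t} : Set T) with hCdef
    -- card of conjugacy class = index of stabilizer in ConjAct T
    set S := MulAction.stabilizer (ConjAct T) t with hSdef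
    have horb : Nat.card (conjugatesOf t) = S.index := by
      have h1 : conjugatesOf t = MulAction.orbit (ConjAct T) t := by
        rw [ConjAct.orbit_eq_carrier_conjClasses]; rfl
      rw [h1, Nat.card_congr (MulAction.orbitEquivQuotientStabilizer (ConjAct T) t)]
      rfl
    have hCS : Nat.card C = Nat.card S := by
      rw [hCdef, Subgroup.centralizer_eq_comap_stabilizer]
      have hmap := Subgroup.map_equiv_eq_comap_symm
        (ConjAct.toConjAct (G := T)).symm S
      simp only [MulEquiv.symm_symm] at hmap
      simp only [MulEquiv.toMonoidHom_eq_coe]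
      erw [← hmap]
      exact (Nat.card_congr (S.equivMapOfInjective _
        (MulEquiv.injective _)).toEquiv).symm
    have hndvd : ¬ p ∣ S.index := by rw [← horb]; exact hcon t
    have hTcard : S.index * Nat.card S = Nat.card T := S.index_mul_card
    have hfac : (Nat.card C).factorization p = (Nat.card T).factorization p := by
      rw [hCS, ← hTcard, Nat.factorization_mul (Subgroup.index_ne_zero_of_finite)
        (Nat.card_pos).ne', Finsupp.add_apply,
        Nat.factorization_eq_zero_of_not_dvd hndvd, zero_add]
    -- Sylow of C is Sylow of T
    obtain ⟨Q⟩ : Nonempty (Sylow p C) := inferInstance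
    have hQcard : Nat.card ((Q : Subgroup C).map C.subtype) =
        p ^ (Nat.card T).factorization p := by
      rw [← Nat.card_congr ((Q : Subgroup C).equivMapOfInjective C.subtype
        C.subtype_injective).toEquiv]
      rw [Q.card_eq_multiplicity, hfac]
    set P' : Sylow p T := Sylow.ofCard _ hQcard with hP'
    obtain ⟨g, hg⟩ := MulAction.exists_smul_eq T P P'
    refine ⟨g, ?_⟩
    rw [hH, Subgroup.mem_centralizer_iff]
    intro x hx
    have hx' : g * x * g⁻¹ ∈ (P' : Subgroup T) := by
      rw [← hg, Sylow.smul_def, Sylow.pointwise_smul_def]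
      have := Subgroup.smul_mem_pointwise_smul x (MulAut.conj g) (P : Subgroup T) hx
      simpa using this
    have hx'' : g * x * g⁻¹ ∈ C := by
      rw [Sylow.coe_ofCard] at hx'
      exact Subgroup.map_subtype_le _ hx'
    have key : t * (g * x * g⁻¹) = (g * x * g⁻¹) * t := by
      have := Subgroup.mem_centralizer_iff.mp hx'' t (Set.mem_singleton t)
      exact this
    calc x * (g⁻¹ * t * g) = g⁻¹ * ((g * x * g⁻¹) * t) * g := by group
      _ = g⁻¹ * (t * (g * x * g⁻¹)) * g := by rw [key]
      _ = (g⁻¹ * t * g) * x := by group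
  -- H must be ⊤, else Jordan gives a contradiction
  have hHtop : H = ⊤ := by
    by_contra hne
    have hcard : 1 < Fintype.card (T ⧸ H) := by
      have := Subgroup.one_lt_index_of_ne_top (H := H) hne
      rwa [Subgroup.index, Nat.card_eq_fintype_card] at this
    obtain ⟨g₀, hg₀⟩ := jordan_aux (G := T) (X := T ⧸ H) hcard
    obtain ⟨g, hg⟩ := cover g₀
    apply hg₀ ((g : T) : T ⧸ H)
    show ((g₀ * g : T) : T ⧸ H) = (g : T ⧸ H)
    rw [QuotientGroup.eq]
    have : (g⁻¹ * g₀ * g)⁻¹ ∈ H := H.inv_mem hg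
    simpa [mul_assoc] using this
  -- so P is central, hence trivial; contradiction with p ∣ |T|
  have hPle : (P : Subgroup T) ≤ Subgroup.center T := by
    intro x hx
    rw [Subgroup.mem_center_iff]
    intro y
    have hy : y ∈ H := hHtop ▸ Subgroup.mem_top y
    exact (Subgroup.mem_centralizer_iff.mp hy x hx).symm
  have hZ : Subgroup.center T = ⊥ := by
    rcases IsSimpleGroup.eq_bot_or_eq_top_of_normal (Subgroup.center T) inferInstance with h | h
    · exact h
    · exfalso
      obtain ⟨a, b, hab⟩ := hna
      apply hab
      have : a ∈ Subgroup.center T := h ▸ Subgroup.mem_top a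
      exact (Subgroup.mem_center_iff.mp this b).symm
  have hPbot : (P : Subgroup T) = ⊥ := le_bot_iff.mp (hZ ▸ hPle)
  have h1 : Nat.card P = 1 := by rw [hPbot]; exact Subgroup.card_bot
  rw [P.card_eq_multiplicity] at h1
  have hk : (Nat.card T).factorization p ≠ 0 :=
    (Nat.Prime.factorization_pos_of_dvd hp (Nat.card_pos).ne' hdvd).ne'
  have h2 : 1 < p ^ (Nat.card T).factorization p :=
    Nat.one_lt_pow hk hp.one_lt
  omega
end

section
/- Let G = A_n or S_n with n ≥ 5 act naturally on the set of k-element subsets of {1,…,n}, where 1 ≤ k < n/2. Then G is 3/2-transitive (all nontrivial suborbits have equal size > 1) if and only if either k = 1, or (n, k) = (7, 2). -/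
open Pointwise

/-- A transitive permutation group is `3/2`-transitive if all orbits of a point
stabiliser on the points different from the fixed point have the same size,
this size being greater than 1. -/
def IsThreeHalvesTransitive (G Ω : Type*) [Group G] [MulAction G Ω] : Prop :=
  MulAction.IsPretransitive G Ω ∧ ∀ α : Ω, ∃ s : ℕ, 1 < s ∧
    ∀ β : Ω, β ≠ α → Nat.card (MulAction.orbit (MulAction.stabilizer G α) β) = s

/-- The natural action of `Sym(n)` on the `k`-element subsets of `{1, …, n}`. -/
instance ksetAction (n k : ℕ) :
    MulAction (Equiv.Perm (Fin n)) {s : Finset (Fin n) // s.card = k} where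
  smul g s := ⟨g • s.1, by rw [Finset.card_smul_finset]; exact s.2⟩
  one_smul s := Subtype.ext (one_smul _ s.1)
  mul_smul g h s := Subtype.ext (mul_smul g h s.1)

section Aux
variable {X : Type*} [Fintype X] [DecidableEq X]

/-- Any two finsets of the same cardinality are related by a permutation. -/
lemma aux_exists_perm_mem_iff (s t : Finset X) (h : s.card = t.card) :
    ∃ g : Equiv.Perm X, ∀ x, g x ∈ t ↔ x ∈ s := by
  classical
  have e : {x // x ∈ s} ≃ {x // x ∈ t} := Finset.equivOfCardEq h
  refine ⟨e.extendSubtype, fun x => ?_⟩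
  by_cases hx : x ∈ s
  · simpa [hx] using e.extendSubtype_mem x hx
  · simpa [hx] using e.extendSubtype_not_mem x hx

lemma aux_smul_finset_eq (g : Equiv.Perm X) (s t : Finset X)
    (h : ∀ x, g x ∈ t ↔ x ∈ s) : g • s = t := by
  ext y
  rw [← Finset.inv_smul_mem_iff]
  have : (g⁻¹ : Equiv.Perm X) • y = g⁻¹ y := rfl
  rw [this]
  constructor
  · intro hy
    have := (h (g⁻¹ y)).2 hy
    simpa using this
  · intro hy
    exact (h (g⁻¹ y)).1 (by simpa using hy)

/-- There is a permutation fixing `α` (setwise) and carrying `β` to `β'`,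
provided cardinalities match. -/
lemma aux_exists_perm_fixing (α β β' : Finset X) (hb : β.card = β'.card)
    (hi : (β ∩ α).card = (β' ∩ α).card) :
    ∃ g : Equiv.Perm X, (∀ x, g x ∈ α ↔ x ∈ α) ∧ (∀ x, g x ∈ β' ↔ x ∈ β) := by
  classical
  set s₁ : Finset {x // x ∈ α} := β.subtype (· ∈ α) with hs₁
  set t₁ : Finset {x // x ∈ α} := β'.subtype (· ∈ α) with ht₁
  set s₂ : Finset {x // ¬ x ∈ α} := β.subtype (fun x => ¬ x ∈ α) with hs₂
  set t₂ : Finset {x // ¬ x ∈ α} := β'.subtype (fun x => ¬ x ∈ α) with ht₂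
  have hc1 : s₁.card = t₁.card := by
    rw [hs₁, ht₁, Finset.card_subtype, Finset.card_subtype]
    simpa [Finset.filter_mem_eq_inter] using hi
  have hc2 : s₂.card = t₂.card := by
    rw [hs₂, ht₂, Finset.card_subtype, Finset.card_subtype,
      ← Finset.sdiff_eq_filter, ← Finset.sdiff_eq_filter]
    have h1 : (β ∩ α).card + (β \ α).card = β.card := by
      rw [Finset.filter_mem_eq_inter.symm, Finset.sdiff_eq_filter,
        Finset.card_filter_add_card_filter_not]
    have h2 : (β' ∩ α).card + (β' \ α).card = β'.card := by
      rw [Finset.filter_mem_eq_inter.symm, Finset.sdiff_eq_filter,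
        Finset.card_filter_add_card_filter_not]
    omega
  obtain ⟨π₁, hπ₁⟩ := aux_exists_perm_mem_iff s₁ t₁ hc1
  obtain ⟨π₂, hπ₂⟩ := aux_exists_perm_mem_iff s₂ t₂ hc2
  refine ⟨Equiv.Perm.subtypeCongr π₁ π₂, fun x => ?_, fun x => ?_⟩
  · by_cases hx : x ∈ α
    · rw [Equiv.Perm.subtypeCongr.left_apply _ _ hx]
      simp [hx, (π₁ ⟨x, hx⟩).2]
    · rw [Equiv.Perm.subtypeCongr.right_apply _ _ hx]
      simp [hx, (π₂ ⟨x, hx⟩).2]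
  · by_cases hx : x ∈ α
    · rw [Equiv.Perm.subtypeCongr.left_apply _ _ hx]
      have := hπ₁ ⟨x, hx⟩
      rw [hs₁, ht₁, Finset.mem_subtype, Finset.mem_subtype] at this
      simpa using this
    · rw [Equiv.Perm.subtypeCongr.right_apply _ _ hx]
      have := hπ₂ ⟨x, hx⟩
      rw [hs₂, ht₂, Finset.mem_subtype, Finset.mem_subtype] at this
      simpa using this

/-- Pigeonhole: an odd permutation fixing two given finsets setwise. -/
lemma aux_exists_odd_fixing (hn : 5 ≤ Fintype.card X) (α β : Finset X) :
    ∃ τ : Equiv.Perm X, Equiv.Perm.sign τ = -1 ∧ (∀ x, τ x ∈ α ↔ x ∈ α) ∧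
      (∀ x, τ x ∈ β ↔ x ∈ β) := by
  classical
  obtain ⟨x, y, hxy, hf⟩ := Fintype.exists_ne_map_eq_of_card_lt
    (fun z : X => ((decide (z ∈ α), decide (z ∈ β)) : Bool × Bool)) (by simp; omega)
  have hα : x ∈ α ↔ y ∈ α := by
    have := congrArg Prod.fst hf; simp at this; simpa using this
  have hβ : x ∈ β ↔ y ∈ β := by
    have := congrArg Prod.snd hf; simp at this; simpa using this
  refine ⟨Equiv.swap x y, Equiv.Perm.sign_swap hxy, ?_, ?_⟩ <;> intro z
  · rcases eq_or_ne z x with rfl | hzx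
    · rw [Equiv.swap_apply_left]; exact hα.symm
    rcases eq_or_ne z y with rfl | hzy
    · rw [Equiv.swap_apply_right]; exact hα
    · rw [Equiv.swap_apply_of_ne_of_ne hzx hzy]
  · rcases eq_or_ne z x with rfl | hzx
    · rw [Equiv.swap_apply_left]; exact hβ.symm
    rcases eq_or_ne z y with rfl | hzy
    · rw [Equiv.swap_apply_right]; exact hβ
    · rw [Equiv.swap_apply_of_ne_of_ne hzx hzy]

/-- An even permutation fixing `α` setwise and carrying `β` to `β'`. -/
lemma aux_exists_even_perm (hn : 5 ≤ Fintype.card X) (α β β' : Finset X)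
    (hb : β.card = β'.card) (hi : (β ∩ α).card = (β' ∩ α).card) :
    ∃ g : Equiv.Perm X, g ∈ alternatingGroup X ∧ g • α = α ∧ g • β = β' := by
  classical
  obtain ⟨g₀, hg₀α, hg₀β⟩ := aux_exists_perm_fixing α β β' hb hi
  obtain ⟨τ, hτs, hτα, hτβ⟩ := aux_exists_odd_fixing hn α β
  rcases Int.units_eq_one_or (Equiv.Perm.sign g₀) with hs | hs
  · exact ⟨g₀, Equiv.Perm.mem_alternatingGroup.2 hs,
      aux_smul_finset_eq _ _ _ hg₀α, aux_smul_finset_eq _ _ _ hg₀β⟩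
  · refine ⟨g₀ * τ, Equiv.Perm.mem_alternatingGroup.2 (by simp [hs, hτs]),
      aux_smul_finset_eq _ _ _ ?_, aux_smul_finset_eq _ _ _ ?_⟩
    · intro x
      have : (g₀ * τ) x = g₀ (τ x) := rfl
      rw [this, hg₀α, hτα]
    · intro x
      have : (g₀ * τ) x = g₀ (τ x) := rfl
      rw [this, hg₀β, hτβ]

end Aux

lemma kset_smul_coe {n k : ℕ} (g : Equiv.Perm (Fin n)) (s : {s : Finset (Fin n) // s.card = k}) :
    (g • s).1 = g • s.1 := rfl

lemma kset_subgroup_smul_coe {n k : ℕ} (G : Subgroup (Equiv.Perm (Fin n))) (g : G)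
    (s : {s : Finset (Fin n) // s.card = k}) :
    (g • s).1 = (g : Equiv.Perm (Fin n)) • s.1 := rfl

lemma kset_stab_smul_coe {n k : ℕ} (G : Subgroup (Equiv.Perm (Fin n)))
    (α : {s : Finset (Fin n) // s.card = k}) (g : MulAction.stabilizer G α)
    (s : {s : Finset (Fin n) // s.card = k}) :
    (g • s).1 = ((g : G) : Equiv.Perm (Fin n)) • s.1 := rfl

lemma orbit_stabilizer_eq {n k : ℕ} (hn : 5 ≤ n) (G : Subgroup (Equiv.Perm (Fin n)))
    (hA : alternatingGroup (Fin n) ≤ G) (α β : {s : Finset (Fin n) // s.card = k}) :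
    MulAction.orbit (MulAction.stabilizer G α) β
      = {γ : {s : Finset (Fin n) // s.card = k} | (γ.1 ∩ α.1).card = (β.1 ∩ α.1).card} := by
  ext γ
  simp only [Set.mem_setOf_eq, MulAction.mem_orbit_iff]
  constructor
  · rintro ⟨⟨g, hg⟩, rfl⟩
    have hgα : (g : Equiv.Perm (Fin n)) • α.1 = α.1 := by
      have := congrArg Subtype.val (MulAction.mem_stabilizer_iff.1 hg)
      simpa [kset_subgroup_smul_coe] using this
    rw [kset_stab_smul_coe]
    conv_lhs => rw [← hgα]
    rw [← Finset.smul_finset_inter, Finset.card_smul_finset]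
  · intro hγ
    have hcard : β.1.card = γ.1.card := by rw [β.2, γ.2]
    have hn' : 5 ≤ Fintype.card (Fin n) := by simpa using hn
    obtain ⟨g, hgA, hgα, hgβ⟩ := aux_exists_even_perm hn' α.1 β.1 γ.1 hcard hγ.symm
    refine ⟨⟨⟨g, hA hgA⟩, ?_⟩, ?_⟩
    · exact MulAction.mem_stabilizer_iff.2 (Subtype.ext hgα)
    · exact Subtype.ext hgβ

lemma count_ksets {n k i : ℕ} (hk : k ≤ n) (hik : i ≤ k) (α : Finset (Fin n))
    (hα : α.card = k) :
    Nat.card {γ : {s : Finset (Fin n) // s.card = k} // (γ.1 ∩ α).card = i}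
      = k.choose i * (n - k).choose (k - i) := by
  classical
  rw [Nat.card_eq_fintype_card]
  rw [Fintype.card_congr (Equiv.subtypeSubtypeEquivSubtypeInter
    (fun s : Finset (Fin n) => s.card = k) (fun s => (s ∩ α).card = i))]
  rw [Fintype.card_subtype]
  have key : (Finset.univ.filter fun s : Finset (Fin n) => s.card = k ∧ (s ∩ α).card = i).card
      = ((α.powersetCard i) ×ˢ ((αᶜ).powersetCard (k - i))).card := by
    refine Finset.card_bij' (fun s _ => (s ∩ α, s \ α)) (fun p _ => p.1 ∪ p.2) ?_ ?_ ?_ ?_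
    · intro s hs
      simp only [Finset.mem_filter, Finset.mem_univ, true_and] at hs
      obtain ⟨hsk, hsi⟩ := hs
      simp only [Finset.mem_product, Finset.mem_powersetCard]
      refine ⟨⟨Finset.inter_subset_right, hsi⟩, fun x hx => ?_, ?_⟩
      · simp only [Finset.mem_sdiff] at hx
        simpa [Finset.mem_compl] using hx.2
      · have : (s ∩ α).card + (s \ α).card = s.card := by
          rw [← Finset.filter_mem_eq_inter, Finset.sdiff_eq_filter,
            Finset.card_filter_add_card_filter_not]
        omega
    · intro p hp
      simp only [Finset.mem_product, Finset.mem_powersetCard] at hp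
      obtain ⟨⟨h1, h2⟩, h3, h4⟩ := hp
      have hdisj : Disjoint p.1 p.2 := by
        refine Finset.disjoint_left.2 fun x hx1 hx2 => ?_
        have := h3 hx2
        simp only [Finset.mem_compl] at this
        exact this (h1 hx1)
      simp only [Finset.mem_filter, Finset.mem_univ, true_and]
      constructor
      · rw [Finset.card_union_of_disjoint hdisj, h2, h4]; omega
      · rw [Finset.union_inter_distrib_right]
        have e1 : p.1 ∩ α = p.1 := Finset.inter_eq_left.2 h1
        have e2 : p.2 ∩ α = ∅ := by
          refine Finset.eq_empty_of_forall_notMem fun x hx => ?_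
          simp only [Finset.mem_inter] at hx
          have := h3 hx.1
          simp only [Finset.mem_compl] at this
          exact this hx.2
        rw [e1, e2, Finset.union_empty, h2]
    · intro s hs
      simp only
      rw [Finset.union_comm, Finset.sdiff_union_inter]
    · intro p hp
      simp only [Finset.mem_product, Finset.mem_powersetCard] at hp
      obtain ⟨⟨h1, _⟩, h3, _⟩ := hp
      have e2 : p.2 ∩ α = ∅ := by
        refine Finset.eq_empty_of_forall_notMem fun x hx => ?_
        simp only [Finset.mem_inter] at hx
        have := h3 hx.1
        simp only [Finset.mem_compl] at this
        exact this hx.2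
      have hd1 : p.1 \ α = ∅ := Finset.sdiff_eq_empty_iff_subset.2 h1
      have hd2 : p.2 \ α = p.2 := Finset.sdiff_eq_self_iff_disjoint.2
        (Finset.disjoint_left.2 fun x hx2 hxa => by
          have := h3 hx2; simp only [Finset.mem_compl] at this; exact this hxa)
      have e1 : p.1 ∩ α = p.1 := Finset.inter_eq_left.2 h1
      have : ((p.1 ∪ p.2) ∩ α, (p.1 ∪ p.2) \ α) = p := by
        rw [Finset.union_inter_distrib_right, Finset.union_sdiff_distrib, e1, e2, hd1, hd2,
          Finset.union_empty, Finset.empty_union]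
      exact this
  rw [key, Finset.card_product, Finset.card_powersetCard, Finset.card_powersetCard,
    Finset.card_compl, Fintype.card_fin, hα]

lemma two_mul_choose_two' (m : ℕ) : 2 * (m + 1).choose 2 = (m + 1) * m := by
  induction m with
  | zero => decide
  | succ p ih =>
    rw [show p + 1 + 1 = (p + 1) + 1 from rfl, Nat.choose_succ_succ (p + 1) 1,
      Nat.mul_add, ih, Nat.choose_one_right]
    ring

lemma two_mul_choose_two (m : ℕ) : 2 * m.choose 2 = m * (m - 1) := by
  cases m with
  | zero => decide
  | succ p => simpa using two_mul_choose_two' p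

lemma kset_inter_card_lt {n k : ℕ} (α β : {s : Finset (Fin n) // s.card = k}) (h : β ≠ α) :
    (β.1 ∩ α.1).card < k := by
  have hle : (β.1 ∩ α.1).card ≤ k :=
    le_trans (Finset.card_le_card Finset.inter_subset_left) (le_of_eq β.2)
  rcases lt_or_eq_of_le hle with h' | h'
  · exact h'
  exfalso
  have h1 : β.1 ∩ α.1 = β.1 :=
    Finset.eq_of_subset_of_card_le Finset.inter_subset_left (by rw [h', β.2])
  have hsub : β.1 ⊆ α.1 := by rw [← h1]; exact Finset.inter_subset_right
  exact h (Subtype.ext (Finset.eq_of_subset_of_card_le hsub (by rw [α.2, β.2])))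

lemma natcard_orbit {n k : ℕ} (hn : 5 ≤ n) (hkn : k ≤ n)
    (G : Subgroup (Equiv.Perm (Fin n))) (hA : alternatingGroup (Fin n) ≤ G)
    (α β : {s : Finset (Fin n) // s.card = k}) :
    Nat.card (MulAction.orbit (MulAction.stabilizer G α) β)
      = k.choose ((β.1 ∩ α.1).card) * (n - k).choose (k - (β.1 ∩ α.1).card) := by
  have hik : (β.1 ∩ α.1).card ≤ k :=
    le_trans (Finset.card_le_card Finset.inter_subset_left) (le_of_eq β.2)
  rw [orbit_stabilizer_eq hn G hA α β]
  exact count_ksets hkn hik α.1 α.2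

/-- Lemma 4.2: for `G = Aₙ` or `Sₙ` (`n ≥ 5`) acting on `k`-sets with `1 ≤ k < n/2`,
`G` is `3/2`-transitive iff `k = 1` or `(n,k) = (7,2)`. -/
theorem stmt9 (n k : ℕ) (hn : 5 ≤ n) (hk1 : 1 ≤ k) (hk2 : 2 * k < n)
    (G : Subgroup (Equiv.Perm (Fin n)))
    (hG : G = alternatingGroup (Fin n) ∨ G = ⊤) :
    IsThreeHalvesTransitive G {s : Finset (Fin n) // s.card = k} ↔
      (k = 1 ∨ (n = 7 ∧ k = 2)) := by
  have hA : alternatingGroup (Fin n) ≤ G := by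
    rcases hG with rfl | rfl
    · exact le_rfl
    · exact le_top
  have hkn : k ≤ n := by omega
  have hn' : 5 ≤ Fintype.card (Fin n) := by simpa using hn
  constructor
  · rintro ⟨htr, horb⟩
    by_cases hk : k = 1
    · exact Or.inl hk
    right
    have hk2' : 2 ≤ k := by omega
    obtain ⟨α0, -, hα0⟩ :=
      Finset.exists_subset_card_eq (s := (Finset.univ : Finset (Fin n))) (n := k) (by simpa using hkn)
    set α : {s : Finset (Fin n) // s.card = k} := ⟨α0, hα0⟩ with hαdef
    obtain ⟨s, hs1, hs⟩ := horb α
    -- the suborbit with intersection k-1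
    have hcount1 : Nat.card {γ : {s : Finset (Fin n) // s.card = k} //
        (γ.1 ∩ α0).card = k - 1} = k.choose (k - 1) * (n - k).choose (k - (k - 1)) :=
      count_ksets hkn (by omega) α0 hα0
    have hch1 : k.choose (k - 1) = k := by
      rw [Nat.choose_symm (by omega : 1 ≤ k), Nat.choose_one_right]
    have hch1' : k - (k - 1) = 1 := by omega
    have hpos1 : 0 < Nat.card {γ : {s : Finset (Fin n) // s.card = k} //
        (γ.1 ∩ α0).card = k - 1} := by
      rw [hcount1, hch1, hch1', Nat.choose_one_right]
      have : 0 < n - k := by omega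
      positivity
    obtain ⟨β, hβ⟩ := (Nat.card_pos_iff.1 hpos1).1
    have hβne : β ≠ α := by
      intro h
      rw [h] at hβ
      simp only [hαdef, Finset.inter_self] at hβ
      omega
    have hOβ := hs β hβne
    rw [natcard_orbit hn hkn G hA α β] at hOβ
    have hβα : (β.1 ∩ α.1).card = k - 1 := hβ
    rw [hβα, hch1, hch1', Nat.choose_one_right] at hOβ
    -- the suborbit with intersection k-2
    have hch2 : k.choose (k - 2) = k.choose 2 := by
      rw [Nat.choose_symm (by omega : 2 ≤ k)]
    have hch2' : k - (k - 2) = 2 := by omega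
    have hcount2 : Nat.card {γ : {s : Finset (Fin n) // s.card = k} //
        (γ.1 ∩ α0).card = k - 2} = k.choose (k - 2) * (n - k).choose (k - (k - 2)) :=
      count_ksets hkn (by omega) α0 hα0
    have hpos2 : 0 < Nat.card {γ : {s : Finset (Fin n) // s.card = k} //
        (γ.1 ∩ α0).card = k - 2} := by
      rw [hcount2, hch2, hch2']
      have c1 : 0 < k.choose 2 := Nat.choose_pos (by omega)
      have c2 : 0 < (n - k).choose 2 := Nat.choose_pos (by omega)
      positivity
    obtain ⟨γ, hγ⟩ := (Nat.card_pos_iff.1 hpos2).1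
    have hγne : γ ≠ α := by
      intro h
      rw [h] at hγ
      simp only [hαdef, Finset.inter_self] at hγ
      omega
    have hOγ := hs γ hγne
    rw [natcard_orbit hn hkn G hA α γ] at hOγ
    have hγα : (γ.1 ∩ α.1).card = k - 2 := hγ
    rw [hγα, hch2, hch2'] at hOγ
    -- now: k * (n - k) = s and (k.choose 2) * ((n-k).choose 2) = s
    obtain ⟨a, ha⟩ : ∃ a, k = a + 1 := ⟨k - 1, by omega⟩
    obtain ⟨b, hb⟩ : ∃ b, n - k = b + 1 := ⟨n - k - 1, by omega⟩
    have ha1 : 1 ≤ a := by omega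
    have hba : a + 1 ≤ b := by omega
    have key : a * b = 4 := by
      have e1 : 2 * k.choose 2 = (a + 1) * a := by
        rw [ha]; simpa using two_mul_choose_two (a + 1)
      have e2 : 2 * (n - k).choose 2 = (b + 1) * b := by
        rw [hb]; simpa using two_mul_choose_two (b + 1)
      have e3 : 4 * ((a + 1) * (b + 1)) = ((a + 1) * a) * ((b + 1) * b) := by
        rw [← e1, ← e2]
        have : 4 * ((a + 1) * (b + 1)) = 4 * s := by
          rw [← ha, ← hb, hOβ]
        rw [this, ← hOγ]
        ring
      have e4 : ((a + 1) * (b + 1)) * 4 = ((a + 1) * (b + 1)) * (a * b) := by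
        rw [show ((a + 1) * (b + 1)) * 4 = 4 * ((a + 1) * (b + 1)) by ring, e3]; ring
      have := Nat.eq_of_mul_eq_mul_left (by positivity) e4
      omega
    have ha4 : a ≤ 4 := Nat.le_of_dvd (by norm_num) ⟨b, key.symm⟩
    interval_cases a <;> omega
  · intro hcase
    have htrans : MulAction.IsPretransitive G {s : Finset (Fin n) // s.card = k} := by
      constructor
      intro x y
      have hc : x.1.card = y.1.card := by rw [x.2, y.2]
      have hi : (x.1 ∩ (∅ : Finset (Fin n))).card = (y.1 ∩ ∅).card := by
        simp
      obtain ⟨g, hgA, -, hg⟩ := aux_exists_even_perm hn' ∅ x.1 y.1 hc hi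
      exact ⟨⟨g, hA hgA⟩, Subtype.ext hg⟩
    refine ⟨htrans, fun α => ?_⟩
    rcases hcase with hk | ⟨hn7, hkk⟩
    · subst hk
      refine ⟨n - 1, by omega, fun β hβ => ?_⟩
      have hi : (β.1 ∩ α.1).card = 0 := by
        have := kset_inter_card_lt α β hβ
        omega
      rw [natcard_orbit hn hkn G hA α β, hi]
      simp [Nat.choose_one_right]
    · subst hn7; subst hkk
      refine ⟨10, by norm_num, fun β hβ => ?_⟩
      have hi : (β.1 ∩ α.1).card < 2 := kset_inter_card_lt α β hβ
      rw [natcard_orbit hn hkn G hA α β]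
      interval_cases h : (β.1 ∩ α.1).card <;> decide
end

section
/- Let G be a finite primitive permutation group of simple diagonal type on Ω, and let p be a prime dividing |Ω|. Then G has a subdegree divisible by p. -/
open MulAction Subgroup

lemma aux_stab_subgroupOf {G Ω : Type*} [Group G] [MulAction G Ω] (K : Subgroup G) (β : Ω) :
    MulAction.stabilizer K β = (MulAction.stabilizer G β).subgroupOf K := by
  ext ⟨x, hx⟩
  simp [MulAction.mem_stabilizer_iff, Subgroup.mem_subgroupOf, Subgroup.smul_def]

lemma aux_card_orbit_eq_relIndex {G Ω : Type*} [Group G] [MulAction G Ω] (K : Subgroup G)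
    (β : Ω) : Nat.card (MulAction.orbit K β) = (MulAction.stabilizer G β).relIndex K := by
  rw [Nat.card_coe_set_eq, ← MulAction.index_stabilizer, aux_stab_subgroupOf]
  rfl

lemma aux_orbit_dvd_of_normal {G Ω : Type*} [Group G] [Finite G] [MulAction G Ω]
    (K : Subgroup G) [K.Normal] (β : Ω) :
    Nat.card (MulAction.orbit K β) ∣ Nat.card (MulAction.orbit G β) := by
  classical
  set S := MulAction.stabilizer G β with hS
  have h2 : Nat.card (MulAction.orbit G β) = S.index := by
    rw [Nat.card_coe_set_eq, ← MulAction.index_stabilizer]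
  rw [aux_card_orbit_eq_relIndex K β, h2]
  -- key : S.relIndex K = S.relIndex (S ⊔ K)
  have e1 : (S ⊓ K).relIndex S * S.relIndex (S ⊔ K) = (S ⊓ K).relIndex (S ⊔ K) :=
    relIndex_mul_relIndex _ _ _ inf_le_left le_sup_left
  have e2 : (S ⊓ K).relIndex K * K.relIndex (S ⊔ K) = (S ⊓ K).relIndex (S ⊔ K) :=
    relIndex_mul_relIndex _ _ _ inf_le_right le_sup_right
  have e3 : (S ⊓ K).relIndex S = K.relIndex S := inf_relIndex_left S K
  have e4 : K.relIndex (S ⊔ K) = K.relIndex S := relIndex_sup_right S K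
  have e5 : (S ⊓ K).relIndex K = S.relIndex K := inf_relIndex_right S K
  have hpos : K.relIndex S ≠ 0 := by
    rw [Subgroup.relIndex]
    exact Subgroup.index_ne_zero_of_finite
  have key : S.relIndex K = S.relIndex (S ⊔ K) := by
    have h6 : K.relIndex S * S.relIndex (S ⊔ K) = K.relIndex S * S.relIndex K := by
      calc K.relIndex S * S.relIndex (S ⊔ K)
          = (S ⊓ K).relIndex S * S.relIndex (S ⊔ K) := by rw [e3]
        _ = (S ⊓ K).relIndex (S ⊔ K) := e1
        _ = (S ⊓ K).relIndex K * K.relIndex (S ⊔ K) := e2.symm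
        _ = S.relIndex K * K.relIndex S := by rw [e5, e4]
        _ = K.relIndex S * S.relIndex K := Nat.mul_comm _ _
    exact (Nat.eq_of_mul_eq_mul_left (Nat.pos_of_ne_zero hpos) h6).symm
  rw [key]
  exact Subgroup.relIndex_dvd_index_of_le le_sup_left


lemma aux_conj_cover {T : Type*} [Group T] [Finite T] (C : Subgroup T)
    (hcov : ∀ s : T, ∃ x ∈ C, ∃ d : T, d * x * d⁻¹ = s) : C = ⊤ := by
  classical
  rw [← Subgroup.index_eq_one]
  by_contra hidx
  have hi0 : C.index ≠ 0 := Subgroup.index_ne_zero_of_finite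
  let F : (T ⧸ C) × {c : C // c ≠ 1} ⊕ Unit → T := fun z =>
    match z with
    | Sum.inl (q, c) => q.out * (c.1 : T) * q.out⁻¹
    | Sum.inr _ => 1
  have hF : Function.Surjective F := by
    intro s
    by_cases hs : s = 1
    · exact ⟨Sum.inr Unit.unit, hs.symm⟩
    · obtain ⟨x, hxC, d, hd⟩ := hcov s
      have hx1 : x ≠ 1 := by
        rintro rfl
        apply hs
        rw [← hd, mul_one, mul_inv_cancel]
      set q : T ⧸ C := (d : T ⧸ C) with hq
      have hout : ((q.out : T) : T ⧸ C) = (d : T ⧸ C) := (QuotientGroup.out_eq' q).trans hq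
      have hc0 : d⁻¹ * q.out ∈ C := (QuotientGroup.eq (s := C)).mp hout.symm
      set c0 : T := d⁻¹ * q.out with hc0def
      have houtc : q.out = d * c0 := by rw [hc0def, mul_inv_cancel_left]
      have hmem : c0⁻¹ * x * c0 ∈ C := mul_mem (mul_mem (inv_mem hc0) hxC) hc0
      have hne : (⟨c0⁻¹ * x * c0, hmem⟩ : C) ≠ 1 := by
        intro h
        apply hx1
        have := congrArg (Subtype.val) h
        simp only [Subgroup.coe_one] at this
        have : x * c0 = c0 := by
          calc x * c0 = c0 * (c0⁻¹ * x * c0) := by group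
            _ = c0 * 1 := by rw [this]
            _ = c0 := mul_one c0
        exact mul_right_cancel (by rw [this, one_mul])
      refine ⟨Sum.inl (q, ⟨⟨c0⁻¹ * x * c0, hmem⟩, hne⟩), ?_⟩
      show q.out * (c0⁻¹ * x * c0) * q.out⁻¹ = s
      rw [houtc, ← hd]
      group
  have hineq := Nat.card_le_card_of_surjective F hF
  have hcard1 : Nat.card ((T ⧸ C) × {c : C // c ≠ 1} ⊕ PUnit)
      = C.index * Nat.card {c : C // c ≠ 1} + 1 := by
    rw [Nat.card_sum, Nat.card_prod, Subgroup.index_eq_card]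
    simp
  have hCcard : Nat.card C = Nat.card {c : C // c ≠ 1} + 1 := by
    rw [← Nat.card_congr (Equiv.optionSubtypeNe (1 : C)), Finite.card_option]
  have hmul : Nat.card C * C.index = Nat.card T := Subgroup.card_mul_index C
  set m := Nat.card {c : C // c ≠ 1}
  set i := C.index
  rw [hcard1] at hineq
  rw [hCcard] at hmul
  have : (m + 1) * i ≤ i * m + 1 := by rw [hmul]; exact hineq
  have h2 : m * i + i ≤ m * i + 1 := by
    calc m * i + i = (m + 1) * i := by ring
      _ ≤ i * m + 1 := this
      _ = m * i + 1 := by ring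
  have : i ≤ 1 := Nat.le_of_add_le_add_left h2
  omega

lemma aux_exists_class_divisible {T : Type*} [Group T] [Finite T] [IsSimpleGroup T]
    (hna : ∃ a b : T, a * b ≠ b * a) {p : ℕ} (hp : p.Prime) (hpT : p ∣ Nat.card T) :
    ∃ s : T, p ∣ (Subgroup.centralizer {s}).index := by
  by_contra hcon
  push_neg at hcon
  haveI : Fact p.Prime := ⟨hp⟩
  have hcenter : Subgroup.center T = ⊥ := by
    rcases IsSimpleGroup.eq_bot_or_eq_top_of_normal (Subgroup.center T) inferInstance with h | h
    · exact h
    · obtain ⟨a, b, hab⟩ := hna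
      exfalso
      apply hab
      have : a ∈ Subgroup.center T := h ▸ Subgroup.mem_top a
      exact (Subgroup.mem_center_iff.mp this b).symm
  have := Fintype.ofFinite T
  obtain ⟨g, hg⟩ := exists_prime_orderOf_dvd_card (G := T) p (by rwa [← Nat.card_eq_fintype_card])
  have hg1 : g ≠ 1 := by
    intro h
    rw [h, orderOf_one] at hg
    exact hp.one_lt.ne' hg.symm
  set C := Subgroup.centralizer ({g} : Set T) with hC
  have hcov : ∀ s : T, ∃ x ∈ C, ∃ d : T, d * x * d⁻¹ = s := by
    intro s
    -- orbit card not divisible by p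
    have hps : ¬ p ∣ Nat.card (MulAction.orbit (ConjAct T) s) := by
      have h1 : Nat.card (MulAction.orbit (ConjAct T) s)
          = (MulAction.stabilizer (ConjAct T) s).index := by
        rw [Nat.card_coe_set_eq, ← MulAction.index_stabilizer]
      have hcomap : Subgroup.centralizer ({s} : Set T)
          = (MulAction.stabilizer (ConjAct T) s).comap
              (ConjAct.toConjAct : T ≃* ConjAct T).toMonoidHom := by
        ext x
        simp only [Subgroup.mem_comap, MulEquiv.coe_toMonoidHom, MulAction.mem_stabilizer_iff,
          ConjAct.toConjAct_smul, Subgroup.mem_centralizer_iff]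
        constructor
        · intro h
          have := h s (Set.mem_singleton s)
          rw [← this]; group
        · intro h m hm
          rw [Set.mem_singleton_iff] at hm
          rw [hm]
          calc s * x = (x * s * x⁻¹) * x := by rw [h]
            _ = x * s := by group
      have h2 : (Subgroup.centralizer ({s} : Set T)).index
          = (MulAction.stabilizer (ConjAct T) s).index := by
        rw [hcomap, Subgroup.index_comap]
        rw [MonoidHom.range_eq_top_of_surjective _ (ConjAct.toConjAct (G := T)).surjective]
        exact Subgroup.relIndex_top_right _
      rw [h1, ← h2]
      exact hcon s
    set cg := ConjAct.toConjAct g with hcg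
    have hocg : orderOf cg = p := by
      rw [hcg]
      exact (orderOf_injective (ConjAct.toConjAct : T ≃* ConjAct T).toMonoidHom
        (ConjAct.toConjAct (G := T)).injective g).trans hg
    set P := Subgroup.zpowers cg with hP
    have hPp : IsPGroup p P := IsPGroup.of_card (n := 1) (by rw [Nat.card_zpowers, hocg, pow_one])
    have hfix := hPp.card_modEq_card_fixedPoints (MulAction.orbit (ConjAct T) s)
    have hne : Nat.card (MulAction.fixedPoints P (MulAction.orbit (ConjAct T) s)) ≠ 0 := by
      intro h0
      rw [h0] at hfix
      exact hps ((Nat.modEq_zero_iff_dvd).mp hfix)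
    obtain ⟨y, hy⟩ := (Nat.card_ne_zero.mp hne).1
    obtain ⟨x, hx⟩ := y
    have hgx : cg • x = x := by
      have := hy ⟨cg, Subgroup.mem_zpowers cg⟩
      have := congrArg Subtype.val this
      exact this
    have hxC : x ∈ C := by
      rw [hC, Subgroup.mem_centralizer_iff]
      intro m hm
      rw [Set.mem_singleton_iff] at hm
      rw [hm]
      rw [hcg, ConjAct.toConjAct_smul] at hgx
      calc g * x = (g * x * g⁻¹) * g := by group
        _ = x * g := by rw [hgx]
    obtain ⟨c, hc⟩ := hx
    refine ⟨x, hxC, (ConjAct.ofConjAct c)⁻¹, ?_⟩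
    have hc' : ConjAct.ofConjAct c * s * (ConjAct.ofConjAct c)⁻¹ = x := by
      rw [← ConjAct.smul_def]; exact hc
    rw [← hc']
    group
  have hCtop : C = ⊤ := aux_conj_cover C hcov
  have : g ∈ Subgroup.center T := by
    rw [Subgroup.mem_center_iff]
    intro h
    have : h ∈ C := hCtop ▸ Subgroup.mem_top h
    exact (Subgroup.mem_centralizer_iff.mp this g (Set.mem_singleton g)).symm
  rw [hcenter, Subgroup.mem_bot] at this
  exact hg1 this

def IsPrimitiveAction (G Ω : Type*) [Group G] [MulAction G Ω] : Prop :=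
  MulAction.IsPretransitive G Ω ∧
    ∀ B : Set Ω, MulAction.IsBlock G B → B.Subsingleton ∨ B = Set.univ

/-- Lemma 3.4: a finite primitive permutation group of simple diagonal type (socle
`N ≅ T^k` with `T` nonabelian simple, `k ≥ 2`, and point stabiliser meeting `N` in a
full diagonal subgroup) has, for every prime `p` dividing `|Ω|`, a subdegree
divisible by `p`. -/
theorem stmt13 {G Ω : Type*} [Group G] [Finite G] [Finite Ω] [MulAction G Ω]
    [FaithfulSMul G Ω] (hprim : IsPrimitiveAction G Ω)
    {T : Type*} [Group T] [Finite T] [IsSimpleGroup T]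
    (hna : ∃ a b : T, a * b ≠ b * a)
    (k : ℕ) (hk : 2 ≤ k) (N : Subgroup G) (hN : N.Normal) (hNbot : N ≠ ⊥)
    (e : N ≃* (Fin k → T)) (α : Ω) (φ : Fin k → MulAut T)
    (hdiag : ∀ x : N, (x : G) ∈ MulAction.stabilizer G α ↔ ∃ t : T, e x = fun i => φ i t)
    (p : ℕ) (hp : p.Prime) (hpΩ : p ∣ Nat.card Ω) :
    ∃ β : Ω, p ∣ Nat.card (MulAction.orbit (MulAction.stabilizer G α) β) := by
  classical
  haveI := hN
  haveI := hprim.1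
  set H := MulAction.stabilizer G α with hH
  let i0 : Fin k := ⟨0, by omega⟩
  let i1 : Fin k := ⟨1, by omega⟩
  have hi01 : i1 ≠ i0 := by simp [i0, i1, Fin.ext_iff]
  -- Step 1 : N is transitive
  have horb : MulAction.orbit N α = Set.univ := by
    rcases hprim.2 _ (MulAction.IsBlock.orbit_of_normal (N := N) α) with hsub | huniv
    · exfalso
      apply hNbot
      rw [eq_bot_iff]
      intro n hn
      rw [Subgroup.mem_bot]
      have hfix : ∀ γ : Ω, n • γ = γ := by
        intro γ
        obtain ⟨g, hg⟩ := MulAction.exists_smul_eq G α γ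
        have hmem : g⁻¹ * n * g ∈ N := by
          have := hN.conj_mem n hn g⁻¹
          rwa [inv_inv] at this
        have h1 : (g⁻¹ * n * g) • α ∈ MulAction.orbit N α := ⟨⟨g⁻¹ * n * g, hmem⟩, rfl⟩
        have h2 : (g⁻¹ * n * g) • α = α := hsub h1 (MulAction.mem_orbit_self α)
        calc n • γ = n • g • α := by rw [hg]
          _ = g • ((g⁻¹ * n * g) • α) := by
              rw [smul_smul, smul_smul]
              congr 1
              group
          _ = g • α := by rw [h2]
          _ = γ := hg
      exact eq_of_smul_eq_smul (fun γ : Ω => by rw [hfix γ, one_smul])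
    · exact huniv
  -- Step 2 : p divides card T
  have hcardN : Nat.card N = Nat.card T ^ k := by
    rw [Nat.card_congr e.toEquiv, Nat.card_fun]
    simp
  -- the equiv between T and the stabilizer in N
  have hmemstab : ∀ x : N, x ∈ MulAction.stabilizer N α ↔ ∃ t : T, e x = fun i => φ i t := by
    intro x
    rw [MulAction.mem_stabilizer_iff, ← hdiag x]
    rfl
  let E1 : T ≃ MulAction.stabilizer N α :=
    { toFun := fun t => ⟨e.symm fun i => φ i t,
        (hmemstab _).mpr ⟨t, e.apply_symm_apply _⟩⟩
      invFun := fun x => (φ i0).symm (e x.1 i0)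
      left_inv := fun t => by simp
      right_inv := fun x => by
        obtain ⟨t, ht⟩ := (hmemstab x.1).mp x.2
        ext1
        have h0 : e x.1 i0 = φ i0 t := by rw [ht]
        show e.symm (fun i => φ i ((φ i0).symm (e x.1 i0))) = x.1
        simp only [h0, MulEquiv.symm_apply_apply]
        rw [← ht, MulEquiv.symm_apply_apply] }
  have hcardstab : Nat.card (MulAction.stabilizer N α) = Nat.card T :=
    (Nat.card_congr E1).symm
  have hindex : (MulAction.stabilizer N α).index = Nat.card Ω := by
    rw [MulAction.index_stabilizer, horb, Set.ncard_univ]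
  have hpT : p ∣ Nat.card T := by
    have h1 : Nat.card (MulAction.stabilizer N α) * (MulAction.stabilizer N α).index
        = Nat.card N := Subgroup.card_mul_index _
    have h2 : (MulAction.stabilizer N α).index ∣ Nat.card T ^ k := by
      rw [← hcardN, ← h1]
      exact Dvd.intro_left _ rfl
    exact hp.dvd_of_dvd_pow (dvd_trans (hindex ▸ hpΩ) h2)
  -- Step 3 : a conjugacy class of T of size divisible by p
  obtain ⟨s, hsdvd⟩ := aux_exists_class_divisible hna hp hpT
  -- Step 4 : the point β and the diagonal subgroup
  set n0 : N := e.symm (Pi.mulSingle i0 s) with hn0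
  set β : Ω := (n0 : G) • α with hβ
  refine ⟨β, ?_⟩
  -- the isomorphism Ψ : T ≃* N ⊓ H
  have hmemNH : ∀ t : T, ((e.symm fun i => φ i t : N) : G) ∈ N ⊓ H := by
    intro t
    exact Subgroup.mem_inf.mpr ⟨SetLike.coe_mem _, (hdiag _).mpr ⟨t, e.apply_symm_apply _⟩⟩
  let Ψ : T ≃* ↥(N ⊓ H) :=
    { toFun := fun t => ⟨_, hmemNH t⟩
      invFun := fun x => (φ i0).symm (e ⟨x.1, (Subgroup.mem_inf.mp x.2).1⟩ i0)
      left_inv := fun t => by simp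
      right_inv := fun x => by
        obtain ⟨t, ht⟩ := (hdiag ⟨x.1, (Subgroup.mem_inf.mp x.2).1⟩).mp (Subgroup.mem_inf.mp x.2).2
        have h0 : e ⟨x.1, (Subgroup.mem_inf.mp x.2).1⟩ i0 = φ i0 t := by rw [ht]
        ext1
        show ((e.symm fun i => φ i ((φ i0).symm (e ⟨x.1, (Subgroup.mem_inf.mp x.2).1⟩ i0)) : N) : G)
          = x.1
        simp only [h0, MulEquiv.symm_apply_apply]
        rw [← ht, MulEquiv.symm_apply_apply]
      map_mul' := fun t u => by
        ext1
        show ((e.symm fun i => φ i (t * u) : N) : G) = _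
        rw [show (fun i => φ i (t * u)) = (fun i => φ i t) * fun i => φ i u from
          funext fun i => by simp, map_mul]
        rfl }
  -- Step 5 : the stabilizer of β in N ⊓ H corresponds to the centralizer of s
  have key0 : ∀ z : G, z • β = β ↔ ((n0 : G)⁻¹ * z * (n0 : G)) • α = α := by
    intro z
    have h2 : ((n0 : G)⁻¹ * z * (n0 : G)) • α = α ↔ (z * (n0 : G)) • α = (n0 : G) • α := by
      rw [mul_assoc, ← smul_smul, inv_smul_eq_iff]
    rw [hβ, smul_smul]
    exact h2.symm
  have hstabK : ∀ t : T,
      Ψ t ∈ MulAction.stabilizer ↥(N ⊓ H) β ↔ φ i0 t ∈ Subgroup.centralizer {s} := by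
    intro t
    set x : N := e.symm fun i => φ i t with hx
    have hcoe : ((Ψ t : ↥(N ⊓ H)) : G) = (x : G) := rfl
    rw [MulAction.mem_stabilizer_iff]
    have hsmul : (Ψ t : ↥(N ⊓ H)) • β = ((x : G)) • β := rfl
    rw [hsmul, key0]
    set y : N := n0⁻¹ * x * n0 with hy
    have hycoe : ((y : N) : G) = (n0 : G)⁻¹ * (x : G) * (n0 : G) := by
      push_cast
      rfl
    rw [← hycoe, ← MulAction.mem_stabilizer_iff]
    rw [hdiag y]
    have hey : e y = fun i =>
        ((Pi.mulSingle i0 s : Fin k → T) i)⁻¹ * (φ i t) * ((Pi.mulSingle i0 s : Fin k → T) i) := by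
      have h1 : e n0 = Pi.mulSingle i0 s := e.apply_symm_apply _
      have h2 : e x = fun i => φ i t := e.apply_symm_apply _
      rw [hy, map_mul, map_mul, map_inv, h1, h2]
      funext i
      simp [Pi.mul_apply]
    constructor
    · rintro ⟨u, hu⟩
      rw [hey] at hu
      have ht1 := congrFun hu i1
      simp only [Pi.mulSingle_eq_of_ne hi01, inv_one, one_mul, mul_one] at ht1
      have htu : t = u := (φ i1).injective ht1
      have ht0 := congrFun hu i0
      simp only [Pi.mulSingle_eq_same] at ht0
      rw [← htu] at ht0
      rw [Subgroup.mem_centralizer_iff]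
      intro m hm
      rw [Set.mem_singleton_iff] at hm
      rw [hm]
      calc s * φ i0 t = s * (s⁻¹ * φ i0 t * s) := by rw [ht0]
        _ = φ i0 t * s := by group
    · intro hcomm
      refine ⟨t, ?_⟩
      rw [hey]
      funext i
      by_cases hi : i = i0
      · subst hi
        simp only [Pi.mulSingle_eq_same]
        have := Subgroup.mem_centralizer_iff.mp hcomm s (Set.mem_singleton s)
        rw [mul_assoc, ← this, ← mul_assoc, inv_mul_cancel, one_mul]
      · simp [Pi.mulSingle_eq_of_ne hi]
  -- Step 5b : index of the stabilizer equals index of the centralizer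
  have hstabeq : MulAction.stabilizer ↥(N ⊓ H) β
      = Subgroup.map Ψ.toMonoidHom
          ((Subgroup.centralizer {s}).comap ((φ i0) : T →* T)) := by
    ext x
    rw [Subgroup.mem_map_equiv, Subgroup.mem_comap]
    have := hstabK (Ψ.symm x)
    rw [MulEquiv.apply_symm_apply] at this
    exact this
  have hindexeq : (MulAction.stabilizer ↥(N ⊓ H) β).index
      = (Subgroup.centralizer {s}).index := by
    rw [hstabeq, Subgroup.map_equiv_eq_comap_symm', Subgroup.index_comap,
      MonoidHom.range_eq_top_of_surjective _ Ψ.symm.surjective, Subgroup.relIndex_top_right,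
      Subgroup.index_comap, MonoidHom.range_eq_top_of_surjective _ (φ i0).surjective,
      Subgroup.relIndex_top_right]
  have hporb : p ∣ Nat.card (MulAction.orbit ↥(N ⊓ H) β) := by
    rw [Nat.card_coe_set_eq, ← MulAction.index_stabilizer, hindexeq]
    exact hsdvd
  -- Step 6 : pass to the full stabilizer H
  let K : Subgroup ↥H := (N ⊓ H).subgroupOf H
  haveI hKnorm : K.Normal := by
    constructor
    intro n hn g
    rw [Subgroup.mem_subgroupOf] at hn ⊢
    have hnN : ((n : ↥H) : G) ∈ N := (Subgroup.mem_inf.mp hn).1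
    refine Subgroup.mem_inf.mpr ⟨?_, ?_⟩
    · have := hN.conj_mem _ hnN (g : G)
      simpa using this
    · exact mul_mem (mul_mem g.2 (Subgroup.mem_inf.mp hn).2) (inv_mem g.2)
  have horbeq : MulAction.orbit K β = MulAction.orbit ↥(N ⊓ H) β := by
    ext γ
    constructor
    · rintro ⟨⟨⟨z, hzH⟩, hzK⟩, rfl⟩
      exact ⟨⟨z, Subgroup.mem_subgroupOf.mp hzK⟩, rfl⟩
    · rintro ⟨⟨z, hz⟩, rfl⟩
      exact ⟨⟨⟨z, (Subgroup.mem_inf.mp hz).2⟩, Subgroup.mem_subgroupOf.mpr hz⟩, rfl⟩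
  have hdvd := aux_orbit_dvd_of_normal (G := ↥H) K β
  rw [horbeq] at hdvd
  exact dvd_trans hporb hdvd
end

section
/- Let p and d be primes with d odd, let q = p^f for some positive integer f, and let ε = ±1. Then d does not divide (q^d − ε)/((q − ε)·gcd(q − ε, d)). -/
open Finset

private lemma aux_pow (m : ℤ) (k : ℕ) : (m ^ 2 : ℤ) ∣ (1 + m) ^ k - 1 - k * m := by
  induction k with
  | zero => simp
  | succ n ih =>
    have h : (1 + m) ^ (n + 1) - 1 - (↑(n + 1) : ℤ) * m
        = ((1 + m) ^ n - 1 - n * m) * (1 + m) + m ^ 2 * n := by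
      push_cast; ring
    rw [h]
    exact dvd_add (ih.mul_right _) (Dvd.intro _ rfl)

private lemma aux_sum (r : ℤ) (d : ℕ) (hodd : Odd d) (hdvd : (d : ℤ) ∣ r - 1) :
    ((d : ℤ) ^ 2) ∣ (∑ k ∈ range d, r ^ k) - d := by
  obtain ⟨e, he⟩ := hodd
  set m : ℤ := r - 1 with hm
  have hr : r = 1 + m := by rw [hm]; ring
  have hsumid : (∑ k ∈ range d, (k : ℤ)) = d * e := by
    have h2 : (∑ i ∈ range d, i) * 2 = d * (d - 1) := Finset.sum_range_id_mul_two d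
    have h3 : (∑ i ∈ range d, i) = d * e := by
      have h4 : (∑ i ∈ range d, i) * 2 = (d * e) * 2 := by
        have h5 : d - 1 = 2 * e := by omega
        rw [h2, h5, he]; ring
      exact Nat.eq_of_mul_eq_mul_right two_pos h4
    rw [← Nat.cast_sum, h3]; push_cast; ring
  have key : (m ^ 2 : ℤ) ∣ (∑ k ∈ range d, r ^ k) - d - m * (∑ k ∈ range d, (k : ℤ)) := by
    have heq : (∑ k ∈ range d, r ^ k) - d - m * (∑ k ∈ range d, (k : ℤ))
        = ∑ k ∈ range d, ((1 + m) ^ k - 1 - k * m) := by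
      rw [Finset.sum_sub_distrib, Finset.sum_sub_distrib, ← Finset.sum_mul,
        Finset.sum_const, card_range, nsmul_eq_mul, mul_one, ← hr]
      ring
    rw [heq]
    exact Finset.dvd_sum fun k _ => aux_pow m k
  have h1 : ((d : ℤ) ^ 2) ∣ m ^ 2 := pow_dvd_pow_of_dvd hdvd 2
  have h2 : ((d : ℤ) ^ 2) ∣ m * (∑ k ∈ range d, (k : ℤ)) := by
    rw [hsumid]
    obtain ⟨c, hc⟩ := hdvd
    exact ⟨c * e, by rw [hc]; ring⟩
  have h3 := dvd_add (h1.trans key) h2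
  have h4 : (∑ k ∈ range d, r ^ k) - d - m * (∑ k ∈ range d, (k : ℤ))
      + m * (∑ k ∈ range d, (k : ℤ)) = (∑ k ∈ range d, r ^ k) - d := by ring
  rwa [h4] at h3

/-- Lemma 6.6: let `p` and `d` be primes with `d` odd, `q = p^f`, `ε = ±1`.
Then `d` does not divide `(q^d − ε)/((q − ε)·gcd(q − ε, d))`; here `y` denotes this
(integral) quotient, characterised by `(q − ε)·gcd(q − ε, d)·y = q^d − ε`. -/
theorem stmt16 (p d : ℕ) (hp : p.Prime) (hd : d.Prime) (hodd : Odd d)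
    (f : ℕ) (hf : 0 < f) (ε : ℤ) (hε : ε = 1 ∨ ε = -1) (y : ℤ)
    (hy : (((p : ℤ) ^ f - ε) * (Int.gcd ((p : ℤ) ^ f - ε) (d : ℤ) : ℤ)) * y
      = ((p : ℤ) ^ f) ^ d - ε) :
    ¬ (d : ℤ) ∣ y := by
  have hd1 : 1 < d := hd.one_lt
  set q : ℤ := (p : ℤ) ^ f with hq
  set x : ℤ := q - ε with hxdef
  set g : ℕ := Int.gcd x (d : ℤ) with hg
  have hε2 : ε ^ 2 = 1 := by rcases hε with h | h <;> simp [h]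
  have hεd : ε ^ d = ε := by
    obtain ⟨e, he⟩ := hodd
    rw [he, pow_add, pow_mul, hε2, one_pow, pow_one, one_mul]
  have hq2 : 2 ≤ q := by
    have hp2 : (2 : ℤ) ≤ (p : ℤ) := by exact_mod_cast hp.two_le
    calc (2 : ℤ) ≤ (p : ℤ) := hp2
      _ = (p : ℤ) ^ 1 := (pow_one _).symm
      _ ≤ (p : ℤ) ^ f := pow_le_pow_right₀ (by linarith) hf
  have hxne : x ≠ 0 := by
    rw [hxdef]
    rcases hε with h | h <;> rw [h] <;> intro h0 <;> omega
  set r : ℤ := q * ε with hrdef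
  have hr1 : r - 1 = ε * x := by
    rw [hrdef, hxdef, mul_sub, ← sq, hε2]; ring
  set S : ℤ := ∑ k ∈ range d, r ^ k with hS
  have hgeom : S * (r - 1) = r ^ d - 1 := geom_sum_mul r d
  have hrd : r ^ d - 1 = ε * (q ^ d - ε) := by
    rw [hrdef, mul_pow, hεd, mul_sub, ← sq, hε2]; ring
  have hεne : ε ≠ 0 := by rcases hε with h | h <;> simp [h]
  have hSx : S * x = q ^ d - ε := by
    have h1 : ε * (S * x) = ε * (q ^ d - ε) := by
      rw [← hrd, ← hgeom, hr1]; ring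
    exact mul_left_cancel₀ hεne h1
  have hgy : (g : ℤ) * y = S := by
    have h1 : x * ((g : ℤ) * y) = x * S := by
      calc x * ((g : ℤ) * y) = x * (g : ℤ) * y := by ring
        _ = q ^ d - ε := hy
        _ = S * x := hSx.symm
        _ = x * S := mul_comm _ _
    exact mul_left_cancel₀ hxne h1
  have hgd : g ∣ d := by
    have := Int.gcd_dvd_right (a := x) (b := (d : ℤ))
    exact Int.ofNat_dvd.mp (by exact_mod_cast this)
  rcases (hd.eq_one_or_self_of_dvd g hgd) with hg1 | hgdd
  · -- g = 1
    have hyS : y = S := by rw [← hgy, hg1]; push_cast; ring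
    have hndx : ¬ (d : ℤ) ∣ x := by
      intro hdx
      have h1 : (d : ℤ) ∣ (g : ℤ) := by have := Int.dvd_gcd hdx dvd_rfl; exact_mod_cast this
      have h2 : d ∣ g := Int.ofNat_dvd.mp (by exact_mod_cast h1)
      rw [hg1] at h2
      exact absurd (Nat.le_of_dvd one_pos h2) (by omega)
    haveI : Fact d.Prime := ⟨hd⟩
    intro hdvdy
    have hcast : ((S : ZMod d)) * ((r : ZMod d) - 1) = (r : ZMod d) ^ d - 1 := by
      have := congrArg (fun z : ℤ => (z : ZMod d)) hgeom
      push_cast at this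
      exact this
    rw [ZMod.pow_card] at hcast
    have hrne : (r : ZMod d) - 1 ≠ 0 := by
      intro h0
      have h1 : ((r - 1 : ℤ) : ZMod d) = 0 := by push_cast; exact h0
      have hdr : (d : ℤ) ∣ r - 1 := (ZMod.intCast_zmod_eq_zero_iff_dvd _ _).mp h1
      rw [hr1] at hdr
      apply hndx
      have h2 : (d : ℤ) ∣ ε * (ε * x) := hdr.mul_left ε
      rwa [← mul_assoc, ← sq, hε2, one_mul] at h2
    have hS1 : (S : ZMod d) = 1 := by
      have h' : (S : ZMod d) * ((r : ZMod d) - 1) = 1 * ((r : ZMod d) - 1) := by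
        rw [hcast]; ring
      exact mul_right_cancel₀ hrne h'
    have h0 : ((y : ℤ) : ZMod d) = 0 := (ZMod.intCast_zmod_eq_zero_iff_dvd _ _).mpr hdvdy
    rw [hyS, hS1] at h0
    exact one_ne_zero h0
  · -- g = d
    have hdx : (d : ℤ) ∣ x := by
      have := Int.gcd_dvd_left (a := x) (b := (d : ℤ))
      rwa [← hg, hgdd] at this
    have hdr : (d : ℤ) ∣ r - 1 := by
      rw [hr1]; exact hdx.mul_left ε
    have hkey := aux_sum r d hodd hdr
    rw [← hS, ← hgy, hgdd] at hkey
    have hd2 : ((d : ℤ) * d) ∣ (d : ℤ) * (y - 1) := by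
      have heq : (d : ℤ) * y - d = (d : ℤ) * (y - 1) := by ring
      rw [heq] at hkey
      rwa [sq] at hkey
    have hdne : (d : ℤ) ≠ 0 := by positivity
    have hdy1 : (d : ℤ) ∣ y - 1 := (mul_dvd_mul_iff_left hdne).mp hd2
    intro hdvdy
    have h1 : (d : ℤ) ∣ 1 := by
      have := dvd_sub hdvdy hdy1
      simpa using this
    have := Int.le_of_dvd one_pos h1
    omega
end

section
/- Let G ≤ Sym(Ω) be a finite permutation group. If there exists a k-element subset Γ of Ω such that Γ^g ∩ Γ ≠ ∅ for all g ∈ G, then Γ intersects nontrivially some G-orbit of length at most k² − k + 1. -/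
set_option maxHeartbeats 1000000

open Finset MulAction
open scoped Pointwise

namespace NP17

variable {G Ω : Type*} [Group G] [MulAction G Ω] [Fintype G] [DecidableEq Ω]

private lemma TR_card (x₀ x z : Ω) (hx : x ∈ orbit G x₀) (hz : z ∈ orbit G x₀) :
    (Finset.univ.filter fun g : G => g • x = z).card
      = (Finset.univ.filter fun g : G => g • x₀ = x₀).card := by
  obtain ⟨b, rfl⟩ := mem_orbit_iff.mp hx
  obtain ⟨d, rfl⟩ := mem_orbit_iff.mp hz
  refine Finset.card_bij' (fun g _ => d⁻¹ * g * b) (fun g _ => d * g * b⁻¹) ?_ ?_ ?_ ?_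
  · intro g hg
    simp only [Finset.mem_filter, Finset.mem_univ, true_and] at hg ⊢
    simp [mul_smul, hg]
  · intro g hg
    simp only [Finset.mem_filter, Finset.mem_univ, true_and] at hg ⊢
    simp [mul_smul, hg]
  · intro g _; group
  · intro g _; group

private lemma orbit_count (x : Ω) (O : Finset Ω) (hO : ∀ y, y ∈ O ↔ y ∈ orbit G x) :
    O.card * (Finset.univ.filter fun g : G => g • x = x).card = Fintype.card G := by
  classical
  have h1 : (Finset.univ : Finset G).card
      = ∑ z ∈ O, (Finset.univ.filter fun g : G => g • x = z).card :=
    Finset.card_eq_sum_card_fiberwise (fun g _ => (hO _).mpr (mem_orbit _ _))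
  have h2 : ∀ z ∈ O, (Finset.univ.filter fun g : G => g • x = z).card
      = (Finset.univ.filter fun g : G => g • x = x).card := fun z hz =>
    TR_card x x z (mem_orbit_self x) ((hO z).mp hz)
  rw [← Finset.card_univ, h1, Finset.sum_congr rfl h2, Finset.sum_const, smul_eq_mul]


private lemma nat_cs {α : Type*} (s : Finset α) (f : α → ℕ) :
    (∑ x ∈ s, f x) ^ 2 ≤ s.card * ∑ x ∈ s, (f x) ^ 2 := by
  have h := Finset.sum_mul_sq_le_sq_mul_sq s (fun _ => (1 : ℕ)) f
  simpa using h


private lemma arith (n k c T3 LO QO LP QP : ℕ)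
    (hk : 1 ≤ k) (hc : 1 ≤ c) (hkn : k ≤ n) (hn : k * (k - 1) + 2 ≤ n)
    (A1 : (n * c) * ((n - k) * (k * c)) ≤ T3)
    (A2 : T3 + QO = (k * c) * LO)
    (A3 : LO = n * (k * (k * c)))
    (A4 : LO = LP + n * (k * c))
    (A5 : QO = QP + n * (k * c) ^ 2)
    (A6 : LP ^ 2 ≤ (n * n - n) * QP) : False := by
  have hn1 : 1 ≤ n := le_trans (Nat.le_add_left _ _) hn
  have hnn : n ≤ n * n := Nat.le_mul_of_pos_left n hn1
  -- move to integers
  have hkZ : (1 : ℤ) ≤ (k : ℤ) := by exact_mod_cast hk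
  have hcZ : (1 : ℤ) ≤ (c : ℤ) := by exact_mod_cast hc
  have hknZ : (k : ℤ) ≤ (n : ℤ) := by exact_mod_cast hkn
  have hnZ : (k : ℤ) * ((k : ℤ) - 1) + 2 ≤ (n : ℤ) := by
    have := hn; zify [hk] at this; linarith
  have A1Z : ((n : ℤ) * c) * (((n : ℤ) - k) * (k * c)) ≤ (T3 : ℤ) := by
    have := A1; zify [hkn] at this; linarith
  have A2Z : (T3 : ℤ) + (QO : ℤ) = ((k : ℤ) * c) * (LO : ℤ) := by exact_mod_cast A2
  have A3Z : (LO : ℤ) = (n : ℤ) * (k * (k * c)) := by exact_mod_cast A3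
  have A4Z : (LO : ℤ) = (LP : ℤ) + (n : ℤ) * (k * c) := by exact_mod_cast A4
  have A5Z : (QO : ℤ) = (QP : ℤ) + (n : ℤ) * ((k : ℤ) * c) ^ 2 := by exact_mod_cast A5
  have A6Z : (LP : ℤ) ^ 2 ≤ ((n : ℤ) * n - n) * (QP : ℤ) := by
    have := A6; zify [hnn] at this; linarith
  have e1 : (LP : ℤ) = (n : ℤ) * k * c * ((k : ℤ) - 1) := by
    linear_combination A3Z - A4Z
  have e2 : (T3 : ℤ) = (k : ℤ) * c * LP - QP := by
    linear_combination A2Z - A5Z + ((k : ℤ) * c) * A4Z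
  have i : ((n : ℤ) * c) * (((n : ℤ) - k) * (k * c)) + (QP : ℤ) ≤ (k : ℤ) * c * LP := by
    linarith [A1Z, e2.ge, e2.le]
  have hODnn : (0 : ℤ) ≤ (n : ℤ) * n - n := by nlinarith
  have i3 : (LP : ℤ) ^ 2 + ((n : ℤ) * n - n) * (((n : ℤ) * c) * (((n : ℤ) - k) * (k * c)))
      ≤ ((n : ℤ) * n - n) * ((k : ℤ) * c * LP) := by
    have h1 := mul_le_mul_of_nonneg_left i hODnn
    linarith [A6Z]
  rw [e1] at i3
  have hpos : (0 : ℤ) < (n : ℤ) * n * ((k : ℤ) * ((c : ℤ) * c)) := by positivity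
  have hM : ((n : ℤ) - 1) * ((n : ℤ) - k) + (k : ℤ) * ((k : ℤ) - 1) ^ 2
      ≤ (k : ℤ) * ((k : ℤ) - 1) * ((n : ℤ) - 1) := by
    refine le_of_mul_le_mul_left ?_ hpos
    calc (n : ℤ) * n * ((k : ℤ) * ((c : ℤ) * c))
        * (((n : ℤ) - 1) * ((n : ℤ) - k) + (k : ℤ) * ((k : ℤ) - 1) ^ 2)
        = ((n : ℤ) * k * c * ((k : ℤ) - 1)) ^ 2
          + ((n : ℤ) * n - n) * (((n : ℤ) * c) * (((n : ℤ) - k) * (k * c))) := by ring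
      _ ≤ ((n : ℤ) * n - n) * ((k : ℤ) * c * ((n : ℤ) * k * c * ((k : ℤ) - 1))) := i3
      _ = (n : ℤ) * n * ((k : ℤ) * ((c : ℤ) * c))
          * ((k : ℤ) * ((k : ℤ) - 1) * ((n : ℤ) - 1)) := by ring
  -- final contradiction
  have hu : (1 : ℤ) ≤ (n : ℤ) - 1 - (k : ℤ) * ((k : ℤ) - 1) := by linarith
  nlinarith [hM, hu, sq_nonneg ((k : ℤ) - 1), mul_le_mul_of_nonneg_left hu (sq_nonneg ((k : ℤ) - 1)),
    mul_self_nonneg ((n : ℤ) - 1 - (k : ℤ) * ((k : ℤ) - 1))]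


end NP17

open NP17 in
/-- The Neumann–Praeger restricted movement theorem: if `Γ` is a `k`-subset of `Ω`
such that no element of `G` moves `Γ` completely off itself, then `Γ` meets a
`G`-orbit of length at most `k² − k + 1`. -/
theorem stmt17 {G Ω : Type*} [Group G] [MulAction G Ω] [FaithfulSMul G Ω] [Finite Ω]
    (k : ℕ) (Γ : Finset Ω) (hΓ : Γ.card = k)
    (h : ∀ g : G, ∃ x ∈ Γ, g • x ∈ Γ) :
    ∃ x ∈ Γ, Nat.card (MulAction.orbit G x) ≤ k ^ 2 - k + 1 := by
  classical
  by_contra hcon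
  push_neg at hcon
  haveI : Fintype Ω := Fintype.ofFinite Ω
  haveI : Finite G := Finite.of_injective (MulAction.toPerm : G → Equiv.Perm Ω) MulAction.toPerm_injective
  haveI : Fintype G := Fintype.ofFinite G
  set N := Fintype.card G with hN
  have hN1 : 0 < N := Fintype.card_pos
  obtain ⟨x₁, hx₁, -⟩ := h 1
  have hk1 : 1 ≤ k := hΓ ▸ Finset.card_pos.mpr ⟨x₁, hx₁⟩
  have hOcard : ∀ x : Ω, Nat.card (orbit G x) = (univ.filter (· ∈ orbit G x)).card := by
    intro x
    rw [Nat.card_eq_fintype_card, Fintype.card_subtype]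
  have hcon' : ∀ x ∈ Γ, k * (k - 1) + 2 ≤ (univ.filter (· ∈ orbit G x)).card := by
    intro x hx
    have h1 := hcon x hx
    rw [hOcard] at h1
    have h2 : k ^ 2 - k = k * (k - 1) := by
      rw [pow_two, Nat.mul_sub, mul_one]
    rw [h2] at h1
    omega
  by_cases hA : ∀ x ∈ Γ, ∀ y ∈ Γ, y ∈ orbit G x
  · -- single orbit case
    set O : Finset Ω := univ.filter (· ∈ orbit G x₁) with hOdef
    have hOmem : ∀ y, y ∈ O ↔ y ∈ orbit G x₁ := fun y => by simp [hOdef]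
    set n := O.card with hndef
    set c := (Finset.univ.filter fun g : G => g • x₁ = x₁).card with hcdef
    have hnc : n * c = Fintype.card G := orbit_count x₁ O hOmem
    have hc1 : 1 ≤ c := Finset.card_pos.mpr ⟨1, mem_filter.mpr ⟨mem_univ _, one_smul _ _⟩⟩
    have hGsub : Γ ⊆ O := fun x hx => (hOmem x).mpr (hA x₁ hx₁ x hx)
    have hkn : k ≤ n := hΓ ▸ card_le_card hGsub
    have hn : k * (k - 1) + 2 ≤ n := hcon' x₁ hx₁
    have hTR : ∀ x z, x ∈ O → z ∈ O →
        (Finset.univ.filter fun g : G => g • x = z).card = c :=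
      fun x z hx hz => TR_card x₁ x z ((hOmem x).mp hx) ((hOmem z).mp hz)
    have hsmulO : ∀ g : G, g • Γ ⊆ O := by
      intro g y hy
      rw [Finset.mem_smul_finset] at hy
      obtain ⟨x, hx, rfl⟩ := hy
      obtain ⟨b, rfl⟩ := mem_orbit_iff.mp ((hOmem x).mp (hGsub hx))
      exact (hOmem _).mpr (mem_orbit_iff.mpr ⟨g * b, (mul_smul g b x₁).symm ▸ rfl⟩)
    have hsmul_card : ∀ g : G, (g • Γ).card = k := fun g => by
      rw [Finset.card_smul_finset, hΓ]
    set lam : Ω → Ω → ℕ :=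
      fun z w => (Finset.univ.filter fun g : G => z ∈ g • Γ ∧ w ∈ g • Γ).card with hlamdef
    -- degree
    have hdeg : ∀ z ∈ O, (Finset.univ.filter fun g : G => z ∈ g • Γ).card = k * c := by
      intro z hz
      have hsplit : (Finset.univ.filter fun g : G => z ∈ g • Γ)
          = Γ.biUnion (fun x => Finset.univ.filter fun g : G => g • x = z) := by
        ext g
        simp [Finset.mem_smul_finset]
      rw [hsplit, Finset.card_biUnion]
      · rw [Finset.sum_congr rfl fun x hx => hTR x z (hGsub hx) hz, Finset.sum_const, hΓ,
          smul_eq_mul]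
      · intro x hx y hy hxy
        rw [Function.onFun, Finset.disjoint_left]
        intro g hgx hgy
        rw [mem_filter] at hgx hgy
        exact hxy (smul_left_cancel g (hgx.2.trans hgy.2.symm))
    -- row sums
    have hrow : ∀ z ∈ O, ∑ w ∈ O, lam z w = k * (k * c) := by
      intro z hz
      calc ∑ w ∈ O, lam z w
          = ∑ w ∈ O, ∑ g : G, (if z ∈ g • Γ ∧ w ∈ g • Γ then 1 else 0) := by
            exact Finset.sum_congr rfl fun w _ => Finset.card_filter _ _
        _ = ∑ g : G, ∑ w ∈ O, (if z ∈ g • Γ ∧ w ∈ g • Γ then 1 else 0) := Finset.sum_comm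
        _ = ∑ g : G, (if z ∈ g • Γ then k else 0) := by
            refine Finset.sum_congr rfl fun g _ => ?_
            by_cases hzg : z ∈ g • Γ
            · simp only [hzg, true_and, if_true]
              rw [← Finset.card_filter, Finset.filter_mem_eq_inter,
                Finset.inter_eq_right.mpr (hsmulO g), hsmul_card]
            · simp [hzg]
        _ = (Finset.univ.filter fun g : G => z ∈ g • Γ).card * k := by
            rw [← Finset.sum_filter, Finset.sum_const, smul_eq_mul]
        _ = k * (k * c) := by rw [hdeg z hz]; ring
    have hdiag : ∀ z ∈ O, lam z z = k * c := by
      intro z hz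
      have : lam z z = (Finset.univ.filter fun g : G => z ∈ g • Γ).card := by
        simp only [hlamdef, and_self]
      rw [this]
      exact hdeg z hz
    -- fibers
    set cnt : Ω → Ω → ℕ :=
      fun z w => (Finset.univ.filter fun g : G => w ∈ g • Γ ∧ z ∉ g • Γ).card with hcntdef
    have hfiber : ∀ z w, w ∈ O → lam z w + cnt z w = k * c := by
      intro z w hw
      have h1 := Finset.card_filter_add_card_filter_not
        (s := Finset.univ.filter fun g : G => w ∈ g • Γ) (p := fun g : G => z ∈ g • Γ)
      rw [Finset.filter_filter, Finset.filter_filter, hdeg w hw] at h1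
      have h2 : (Finset.univ.filter fun g : G => w ∈ g • Γ ∧ z ∈ g • Γ) =
          (Finset.univ.filter fun g : G => z ∈ g • Γ ∧ w ∈ g • Γ) := by
        refine Finset.filter_congr fun g _ => ?_
        exact and_comm
      rw [h2] at h1
      exact h1
    -- intersecting family
    have hint : ∀ g g₀ : G, ∃ w, w ∈ g • Γ ∧ w ∈ g₀ • Γ := by
      intro g g₀
      obtain ⟨x, hx, hx'⟩ := h (g₀⁻¹ * g)
      refine ⟨g • x, Finset.smul_mem_smul_finset hx, ?_⟩
      have : g • x = g₀ • ((g₀⁻¹ * g) • x) := by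
        rw [smul_smul, mul_inv_cancel_left]
      rw [this]
      exact Finset.smul_mem_smul_finset hx'
    have key1 : ∀ (g₀ : G), ∀ z ∈ O, k * c ≤ ∑ w ∈ g₀ • Γ, lam z w := by
      intro g₀ z hz
      have hsub2 : (Finset.univ.filter fun g : G => z ∈ g • Γ) ⊆
          (g₀ • Γ).biUnion (fun w => Finset.univ.filter fun g : G => z ∈ g • Γ ∧ w ∈ g • Γ) := by
        intro g hg
        rw [mem_filter] at hg
        obtain ⟨w, hw1, hw2⟩ := hint g g₀
        exact mem_biUnion.mpr ⟨w, hw2, mem_filter.mpr ⟨mem_univ _, hg.2, hw1⟩⟩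
      calc k * c = (Finset.univ.filter fun g : G => z ∈ g • Γ).card := (hdeg z hz).symm
        _ ≤ ((g₀ • Γ).biUnion
              (fun w => Finset.univ.filter fun g : G => z ∈ g • Γ ∧ w ∈ g • Γ)).card :=
            card_le_card hsub2
        _ ≤ ∑ w ∈ g₀ • Γ, lam z w := card_biUnion_le
    set T3 : ℕ := ∑ g₀ : G, ∑ z ∈ O \ (g₀ • Γ), ∑ w ∈ g₀ • Γ, lam z w with hT3def
    have hT3low : (n * c) * ((n - k) * (k * c)) ≤ T3 := by
      rw [hnc]
      calc Fintype.card G * ((n - k) * (k * c)) = ∑ _g₀ : G, (n - k) * (k * c) := by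
            rw [Finset.sum_const, Finset.card_univ, smul_eq_mul]
        _ ≤ T3 := by
            refine Finset.sum_le_sum fun g₀ _ => ?_
            have hcard : (O \ (g₀ • Γ)).card = n - k := by
              rw [card_sdiff_of_subset (hsmulO g₀), hsmul_card]
            calc (n - k) * (k * c) = ∑ z ∈ O \ (g₀ • Γ), k * c := by
                  rw [Finset.sum_const, hcard, smul_eq_mul]
              _ ≤ ∑ z ∈ O \ (g₀ • Γ), ∑ w ∈ g₀ • Γ, lam z w :=
                  Finset.sum_le_sum fun z hz => key1 g₀ z (mem_sdiff.mp hz).1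
    -- reorganize T3
    have hT3eq : T3 = ∑ z ∈ O, ∑ w ∈ O, lam z w * cnt z w := by
      have ha : ∀ g₀ : G, ∑ z ∈ O \ (g₀ • Γ), ∑ w ∈ g₀ • Γ, lam z w
          = ∑ z ∈ O, ∑ w ∈ O, (if w ∈ g₀ • Γ ∧ z ∉ g₀ • Γ then lam z w else 0) := by
        intro g₀
        rw [Finset.sdiff_eq_filter, Finset.sum_filter]
        refine Finset.sum_congr rfl fun z _ => ?_
        by_cases hzg : z ∈ g₀ • Γ
        · simp [hzg]
        · simp only [hzg, not_false_iff, if_true, and_true]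
          rw [← Finset.sum_filter, Finset.filter_mem_eq_inter,
            Finset.inter_eq_right.mpr (hsmulO g₀)]
      calc T3 = ∑ g₀ : G, ∑ z ∈ O, ∑ w ∈ O, (if w ∈ g₀ • Γ ∧ z ∉ g₀ • Γ then lam z w else 0) := by
            rw [hT3def]; exact Finset.sum_congr rfl fun g₀ _ => ha g₀
        _ = ∑ z ∈ O, ∑ g₀ : G, ∑ w ∈ O, (if w ∈ g₀ • Γ ∧ z ∉ g₀ • Γ then lam z w else 0) :=
            Finset.sum_comm
        _ = ∑ z ∈ O, ∑ w ∈ O, ∑ g₀ : G, (if w ∈ g₀ • Γ ∧ z ∉ g₀ • Γ then lam z w else 0) :=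
            Finset.sum_congr rfl fun z _ => Finset.sum_comm
        _ = ∑ z ∈ O, ∑ w ∈ O, lam z w * cnt z w := by
            refine Finset.sum_congr rfl fun z _ => Finset.sum_congr rfl fun w _ => ?_
            rw [← Finset.sum_filter, Finset.sum_const, smul_eq_mul, mul_comm]
    set LO : ℕ := ∑ z ∈ O, ∑ w ∈ O, lam z w with hLOdef
    set QO : ℕ := ∑ z ∈ O, ∑ w ∈ O, (lam z w) ^ 2 with hQOdef
    have hA2 : T3 + QO = (k * c) * LO := by
      rw [hT3eq, hLOdef, hQOdef, ← Finset.sum_add_distrib, Finset.mul_sum]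
      refine Finset.sum_congr rfl fun z _ => ?_
      rw [← Finset.sum_add_distrib, Finset.mul_sum]
      refine Finset.sum_congr rfl fun w hw => ?_
      calc lam z w * cnt z w + lam z w ^ 2 = lam z w * (lam z w + cnt z w) := by ring
        _ = lam z w * (k * c) := by rw [hfiber z w hw]
        _ = (k * c) * lam z w := mul_comm _ _
    have hA3 : LO = n * (k * (k * c)) := by
      rw [hLOdef, Finset.sum_congr rfl hrow, Finset.sum_const, smul_eq_mul]
    -- diagonal splitting
    set LP : ℕ := ∑ p ∈ O.offDiag, lam p.1 p.2 with hLPdef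
    set QP : ℕ := ∑ p ∈ O.offDiag, (lam p.1 p.2) ^ 2 with hQPdef
    have hsplit : ∀ f : Ω → Ω → ℕ, ∑ z ∈ O, ∑ w ∈ O, f z w
        = (∑ p ∈ O.offDiag, f p.1 p.2) + ∑ z ∈ O, f z z := by
      intro f
      rw [← Finset.sum_product', ← Finset.diag_union_offDiag O,
        Finset.sum_union (Finset.disjoint_diag_offDiag O), Finset.sum_diag, add_comm]
    have hA4 : LO = LP + n * (k * c) := by
      rw [hLOdef, hsplit lam, hLPdef]
      congr 1
      rw [Finset.sum_congr rfl hdiag, Finset.sum_const, smul_eq_mul]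
    have hA5 : QO = QP + n * (k * c) ^ 2 := by
      rw [hQOdef, hsplit (fun z w => lam z w ^ 2), hQPdef]
      congr 1
      rw [Finset.sum_congr rfl (fun z hz => by rw [hdiag z hz]), Finset.sum_const, smul_eq_mul]
    have hA6 : LP ^ 2 ≤ (n * n - n) * QP := by
      have := nat_cs O.offDiag (fun p => lam p.1 p.2)
      rwa [Finset.offDiag_card] at this
    exact arith n k c T3 LO QO LP QP hk1 hc1 hkn hn hT3low hA2 hA3 hA4 hA5 hA6
  · -- multi orbit case
    push_neg at hA
    obtain ⟨u, hu, v, hv, hv'⟩ := hA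
    have hm : ∀ x ∈ Γ, (Γ.filter (· ∈ orbit G x)).card ≤ k - 1 := by
      intro x hx
      obtain ⟨w, hw, hw'⟩ : ∃ w ∈ Γ, w ∉ orbit G x := by
        by_cases hux : u ∈ orbit G x
        · refine ⟨v, hv, fun hvx => hv' ?_⟩
          rwa [MulAction.orbit_eq_iff.mpr hux]
        · exact ⟨u, hu, hux⟩
      calc (Γ.filter (· ∈ orbit G x)).card
          ≤ (Γ.erase w).card := by
            refine card_le_card fun y hy => ?_
            rw [mem_filter] at hy
            exact mem_erase.mpr ⟨fun hyw => hw' (hyw ▸ hy.2), hy.1⟩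
        _ = k - 1 := by rw [card_erase_of_mem hw, hΓ]
    have havg : N ≤ ∑ x ∈ Γ, (Γ.filter (· ∈ orbit G x)).card
        * (univ.filter fun g : G => g • x = x).card := by
      have hsub : (univ : Finset G) ⊆ (Γ ×ˢ Γ).biUnion
          (fun p => univ.filter fun g : G => g • p.1 = p.2) := by
        intro g _
        obtain ⟨x, hx, hgx⟩ := h g
        exact mem_biUnion.mpr ⟨(x, g • x), mem_product.mpr ⟨hx, hgx⟩,
          mem_filter.mpr ⟨mem_univ _, rfl⟩⟩
      calc N = (univ : Finset G).card := (card_univ).symm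
        _ ≤ ((Γ ×ˢ Γ).biUnion (fun p => univ.filter fun g : G => g • p.1 = p.2)).card :=
            card_le_card hsub
        _ ≤ ∑ p ∈ Γ ×ˢ Γ, (univ.filter fun g : G => g • p.1 = p.2).card := card_biUnion_le
        _ = ∑ x ∈ Γ, ∑ y ∈ Γ, (univ.filter fun g : G => g • x = y).card := by
            rw [Finset.sum_product]
        _ = ∑ x ∈ Γ, (Γ.filter (· ∈ orbit G x)).card
            * (univ.filter fun g : G => g • x = x).card := by
            refine Finset.sum_congr rfl fun x hx => ?_
            rw [← Finset.sum_filter_add_sum_filter_not Γ (· ∈ orbit G x)]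
            have h0 : ∑ y ∈ Γ.filter (fun y => ¬ y ∈ orbit G x),
                (univ.filter fun g : G => g • x = y).card = 0 := by
              refine Finset.sum_eq_zero fun y hy => ?_
              rw [mem_filter] at hy
              rw [Finset.card_eq_zero, Finset.filter_eq_empty_iff]
              intro g _ hg
              exact hy.2 (hg ▸ mem_orbit _ _)
            have h1 : ∑ y ∈ Γ.filter (· ∈ orbit G x),
                (univ.filter fun g : G => g • x = y).card
                = (Γ.filter (· ∈ orbit G x)).card
                  * (univ.filter fun g : G => g • x = x).card := by
              rw [Finset.sum_congr rfl fun y hy =>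
                TR_card x x y (mem_orbit_self x) (mem_filter.mp hy).2,
                Finset.sum_const, smul_eq_mul]
            rw [h1, h0, add_zero]
    have hfin : N * (k * (k - 1) + 2) ≤ N * (k * (k - 1)) := by
      calc N * (k * (k - 1) + 2)
          ≤ (∑ x ∈ Γ, (Γ.filter (· ∈ orbit G x)).card
              * (univ.filter fun g : G => g • x = x).card) * (k * (k - 1) + 2) :=
            Nat.mul_le_mul_right _ havg
        _ = ∑ x ∈ Γ, (Γ.filter (· ∈ orbit G x)).card
              * ((univ.filter fun g : G => g • x = x).card * (k * (k - 1) + 2)) := by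
            rw [Finset.sum_mul]; exact Finset.sum_congr rfl fun x _ => by ring
        _ ≤ ∑ x ∈ Γ, (Γ.filter (· ∈ orbit G x)).card * N := by
            refine Finset.sum_le_sum fun x hx => Nat.mul_le_mul_left _ ?_
            calc (univ.filter fun g : G => g • x = x).card * (k * (k - 1) + 2)
                ≤ (univ.filter fun g : G => g • x = x).card
                  * (univ.filter (· ∈ orbit G x)).card :=
                  Nat.mul_le_mul_left _ (hcon' x hx)
              _ = N := by
                  rw [mul_comm]
                  exact orbit_count x _ (fun y => by simp)
        _ ≤ ∑ x ∈ Γ, (k - 1) * N := by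
            exact Finset.sum_le_sum fun x hx => Nat.mul_le_mul_right _ (hm x hx)
        _ = N * (k * (k - 1)) := by
            rw [Finset.sum_const, hΓ, smul_eq_mul]; ring
    have := Nat.le_of_mul_le_mul_left (by linarith [hfin] : N * (k * (k - 1) + 2) ≤ N * (k * (k - 1))) hN1
    omega
end

section
/- Let G be a primitive permutation group on product space Ω = Δ^k with G ≤ H wr S_k in product action (k ≥ 2), primitive component H on Δ, and let K ≤ S_k be the image of G under the natural projection G → S_k. If K has an orbit of length ℓ on the set of r-element subsets of {1,…,k} for some r ≤ k, then G has a subdegree divisible by ℓ. -/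
/-- A permutation `g` of `Δ^k` has product form `(σ, f)` (relative to the
permutation group `H ≤ Sym(Δ)`) if it acts by `(g x) i = f i (x (σ⁻¹ i))`, with
each coordinate permutation `f i` lying in `H`.  This expresses membership of `g`
in the wreath product `H wr S_k` in product action. -/
def IsProductForm {Δ : Type*} (k : ℕ) (H : Subgroup (Equiv.Perm Δ))
    (g : Equiv.Perm (Fin k → Δ)) (σ : Equiv.Perm (Fin k))
    (f : Fin k → Equiv.Perm Δ) : Prop :=
  (∀ i, f i ∈ H) ∧ ∀ (x : Fin k → Δ) (i : Fin k), g x i = f i (x (σ.symm i))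


namespace IsProductForm

variable {Δ : Type*} {k : ℕ} {H : Subgroup (Equiv.Perm Δ)}

lemma mul {g g' : Equiv.Perm (Fin k → Δ)} {σ σ' : Equiv.Perm (Fin k)}
    {f f' : Fin k → Equiv.Perm Δ}
    (h1 : IsProductForm k H g σ f) (h2 : IsProductForm k H g' σ' f') :
    IsProductForm k H (g * g') (σ * σ') (fun i => f i * f' (σ.symm i)) := by
  refine ⟨fun i => H.mul_mem (h1.1 i) (h2.1 _), fun x i => ?_⟩
  have hsymm : (σ * σ').symm i = σ'.symm (σ.symm i) := rfl
  simp only [Equiv.Perm.mul_apply, hsymm]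
  rw [h1.2 (g' x) i, h2.2 x (σ.symm i)]

lemma one : IsProductForm k H 1 1 (fun _ => 1) :=
  ⟨fun _ => H.one_mem, fun _ _ => rfl⟩

lemma uniq [Nontrivial Δ] {g : Equiv.Perm (Fin k → Δ)} {σ σ' : Equiv.Perm (Fin k)}
    {f f' : Fin k → Equiv.Perm Δ}
    (h1 : IsProductForm k H g σ f) (h2 : IsProductForm k H g σ' f') :
    σ = σ' ∧ f = f' := by
  classical
  obtain ⟨a, b, hab⟩ := exists_pair_ne Δ
  have hσ : σ = σ' := by
    have hsymm : ∀ i, σ.symm i = σ'.symm i := by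
      intro i
      by_contra hne
      have hx := fun (x : Fin k → Δ) => (h1.2 x i).symm.trans (h2.2 x i)
      set x1 : Fin k → Δ := fun m => if m = σ.symm i then a else b with hx1
      set x2 : Fin k → Δ := fun m => if m = σ.symm i then b else b with hx2
      have e1 := hx x1
      have e2 := hx x2
      simp only [hx1, hx2, if_pos rfl, if_neg (Ne.symm hne)] at e1 e2
      exact hab ((f i).injective (e1.trans e2.symm))
    rw [← Equiv.symm_symm σ, ← Equiv.symm_symm σ', Equiv.ext hsymm]
  refine ⟨hσ, ?_⟩
  funext i
  ext a
  have e1 := h1.2 (fun _ => a) i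
  have e2 := h2.2 (fun _ => a) i
  rw [e1] at e2
  exact e2

end IsProductForm

lemma sum_div_pow_add_le (p k : ℕ) (hp : 2 ≤ p) :
    ∀ b, (∑ i ∈ Finset.Ico 1 (b + 1), k / p ^ i) + k / p ^ b ≤ k := by
  intro b
  induction b with
  | zero => simp
  | succ b ih =>
      rw [Finset.sum_Ico_succ_top (by omega)]
      have h1 : p * (k / p ^ (b + 1)) ≤ k / p ^ b := by
        rw [Nat.le_div_iff_mul_le (pow_pos (show 0 < p by omega) b)]
        calc p * (k / p ^ (b + 1)) * p ^ b = k / p ^ (b + 1) * p ^ (b + 1) := by ring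
          _ ≤ k := Nat.div_mul_le_self _ _
      have h2 : 2 * (k / p ^ (b + 1)) ≤ p * (k / p ^ (b + 1)) :=
        Nat.mul_le_mul_right _ hp
      omega

lemma not_pow_dvd_factorial {p k : ℕ} (hp : p.Prime) (hk : 1 ≤ k) : ¬ p ^ k ∣ Nat.factorial k := by
  rw [hp.pow_dvd_factorial_iff (Nat.lt_succ_self (Nat.log p k)), Nat.succ_eq_add_one]
  have h1 := sum_div_pow_add_le p k hp.two_le (Nat.log p k)
  have h2 : 1 ≤ k / p ^ Nat.log p k :=
    (Nat.one_le_div_iff (pow_pos hp.pos _)).mpr (Nat.pow_log_le_self p (by omega))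
  omega

lemma image_perm_image_perm_inv {ι : Type*} [DecidableEq ι] (σ : Equiv.Perm ι)
    (A : Finset ι) : (A.image ⇑σ).image ⇑σ⁻¹ = A := by
  rw [Finset.image_image]
  have h : ⇑σ⁻¹ ∘ ⇑σ = id := by
    funext a
    simp
  rw [h, Finset.image_id]

theorem stmt19' {Δ : Type*} [Finite Δ] [Nontrivial Δ] (k : ℕ) (hk : 2 ≤ k)
    (H : Subgroup (Equiv.Perm Δ)) (G : Subgroup (Equiv.Perm (Fin k → Δ)))
    (hGprim : MulAction.IsPretransitive G (Fin k → Δ) ∧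
      ∀ B : Set (Fin k → Δ), MulAction.IsBlock G B → B.Subsingleton ∨ B = Set.univ)
    (hprod : ∀ g ∈ G, ∃ (σ : Equiv.Perm (Fin k)) (f : Fin k → Equiv.Perm Δ),
      IsProductForm k H g σ f)
    (r : ℕ) (hr : r ≤ k) (ℓ : ℕ) (J : Finset (Fin k)) (hJ : J.card = r)
    (horb : Nat.card {J' : Finset (Fin k) |
      ∃ g ∈ G, ∃ (σ : Equiv.Perm (Fin k)) (f : Fin k → Equiv.Perm Δ),
        IsProductForm k H g σ f ∧ J' = J.image σ} = ℓ) :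
    ∃ α β : Fin k → Δ,
      ℓ ∣ Nat.card (MulAction.orbit (MulAction.stabilizer G α) β) := by
  classical
  obtain ⟨δ, δ', hδ⟩ := exists_pair_ne Δ
  haveI : Fintype (Fin k → Δ) := Fintype.ofFinite _
  -- choose product forms
  have hprod' : ∀ g : G, ∃ σ f, IsProductForm k H (g : Equiv.Perm (Fin k → Δ)) σ f :=
    fun g => hprod g g.2
  choose π φ hform using hprod'
  have huniq : ∀ (g : G) (σ : Equiv.Perm (Fin k)) (f : Fin k → Equiv.Perm Δ),
      IsProductForm k H (g : Equiv.Perm (Fin k → Δ)) σ f → π g = σ :=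
    fun g σ f h => ((hform g).uniq h).1
  have hπmul : ∀ g h : G, π (g * h) = π g * π h := by
    intro g h
    have h1 := (hform g).mul (hform h)
    rw [← Subgroup.coe_mul] at h1
    exact huniq (g * h) _ _ h1
  let πh : G →* Equiv.Perm (Fin k) := MonoidHom.mk' (fun g => π g) hπmul
  have hπh : ∀ g : G, πh g = π g := fun _ => rfl
  set α : Fin k → Δ := fun _ => δ with hα
  set β : Fin k → Δ := fun i => if i ∈ J then δ' else δ with hβ
  refine ⟨α, β, ?_⟩
  set stab := MulAction.stabilizer G α with hstab
  have hsmul : ∀ (g : G) (x : Fin k → Δ), g • x = (g : Equiv.Perm (Fin k → Δ)) x :=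
    fun _ _ => rfl
  have hfixδ : ∀ s : G, s ∈ stab → ∀ i, φ s i δ = δ := by
    intro s hs i
    have h1 : (s : Equiv.Perm (Fin k → Δ)) α = α := by
      rw [← hsmul]
      exact hs
    have h2 := (hform s).2 α i
    rw [h1] at h2
    exact h2.symm
  set supp : (Fin k → Δ) → Finset (Fin k) :=
    fun γ => Finset.univ.filter (fun i => γ i ≠ δ) with hsuppdef
  have hsupp_mem : ∀ γ i, i ∈ supp γ ↔ γ i ≠ δ := by
    intro γ i
    simp [hsuppdef]
  have hsupp_smul : ∀ s : G, s ∈ stab → ∀ γ,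
      supp ((s : Equiv.Perm (Fin k → Δ)) γ) = (supp γ).image (π s) := by
    intro s hs γ
    ext i
    rw [hsupp_mem, (hform s).2 γ i, Finset.mem_image]
    constructor
    · intro hne
      refine ⟨(π s).symm i, ?_, (π s).apply_symm_apply i⟩
      rw [hsupp_mem]
      intro h0
      rw [h0, hfixδ s hs] at hne
      exact hne rfl
    · rintro ⟨j, hj, rfl⟩
      rw [hsupp_mem] at hj
      rw [Equiv.symm_apply_apply]
      intro h0
      refine hj ((φ s (π s j)).injective ?_)
      rw [h0, hfixδ s hs]
  have hsuppβ : supp β = J := by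
    ext i
    rw [hsupp_mem]
    by_cases hi : i ∈ J <;> simp [hβ, hi, hδ, Ne.symm hδ]
  have hTiff : ∀ J' : Finset (Fin k),
      (∃ g ∈ G, ∃ σ f, IsProductForm k H g σ f ∧ J' = J.image σ) ↔
        ∃ g : G, J' = J.image (π g) := by
    intro J'
    constructor
    · rintro ⟨g, hg, σ, f, hf, rfl⟩
      exact ⟨⟨g, hg⟩, by rw [huniq ⟨g, hg⟩ σ f hf]⟩
    · rintro ⟨g, rfl⟩
      exact ⟨g, g.2, π g, φ g, hform g, rfl⟩
  -- Claim B : the projection of the stabilizer is the whole of K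
  have claimB : ∀ g : G, ∃ s : G, s ∈ stab ∧ π s = π g := by
    have hblock : MulAction.IsBlock G (MulAction.orbit (stab ⊔ πh.ker : Subgroup G) α) :=
      MulAction.IsBlock.of_orbit le_sup_left
    rcases hGprim.2 _ hblock with hsub | huniv
    · exfalso
      have hPle : (stab ⊔ πh.ker) ≤ stab := by
        intro p hp
        have h1 : p • α ∈ MulAction.orbit (stab ⊔ πh.ker : Subgroup G) α :=
          ⟨⟨p, hp⟩, rfl⟩
        have h2 : α ∈ MulAction.orbit (stab ⊔ πh.ker : Subgroup G) α :=
          MulAction.mem_orbit_self α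
        exact hsub h1 h2
      have hker_le : πh.ker ≤ stab := le_trans le_sup_right hPle
      have hker_bot : πh.ker = ⊥ := by
        rw [eq_bot_iff]
        intro b hb
        have hbfix : ∀ x : Fin k → Δ, (b : Equiv.Perm (Fin k → Δ)) x = x := by
          intro x
          obtain ⟨g, hg⟩ := hGprim.1.exists_smul_eq α x
          have hconj : g⁻¹ * b * g ∈ πh.ker := by
            rw [MonoidHom.mem_ker] at hb ⊢
            simp [map_mul, hb]
          have hfix : (g⁻¹ * b * g) • α = α := hker_le hconj
          have : (b * g) • α = g • α := by
            calc (b * g) • α = (g * (g⁻¹ * b * g)) • α := by group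
              _ = g • ((g⁻¹ * b * g) • α) := by rw [mul_smul]
              _ = g • α := by rw [hfix]
          rw [← hsmul, ← hg, ← mul_smul]
          exact this
        rw [Subgroup.mem_bot]
        ext1
        exact Equiv.ext hbfix
      have hinj : Function.Injective πh := (MonoidHom.ker_eq_bot_iff πh).mp hker_bot
      have hd1 : Nat.card (Fin k → Δ) ∣ Nat.card G := by
        have hcongr := Nat.card_congr (MulAction.orbitProdStabilizerEquivGroup G α)
        rw [Nat.card_prod] at hcongr
        haveI := hGprim.1
        rw [MulAction.orbit_eq_univ, Nat.card_congr (Equiv.Set.univ _)] at hcongr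
        exact ⟨_, hcongr.symm⟩
      have hd2 : Nat.card G ∣ Nat.card (Equiv.Perm (Fin k)) :=
        Subgroup.card_dvd_of_injective πh hinj
      have hΩ : Nat.card (Fin k → Δ) = Nat.card Δ ^ k := by
        rw [Nat.card_fun]
        congr 1
        rw [Nat.card_eq_fintype_card, Fintype.card_fin]
      have hperm : Nat.card (Equiv.Perm (Fin k)) = Nat.factorial k := by
        rw [Nat.card_eq_fintype_card, Fintype.card_perm, Fintype.card_fin]
      have hn : 2 ≤ Nat.card Δ := Finite.one_lt_card
      set n := Nat.card Δ with hndef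
      set p := n.minFac with hpdef
      have hp : p.Prime := Nat.minFac_prime (by omega)
      have hdvd : p ^ k ∣ Nat.factorial k := by
        refine dvd_trans (pow_dvd_pow_of_dvd (Nat.minFac_dvd n) k) ?_
        rw [← hΩ, ← hperm]
        exact hd1.trans hd2
      exact not_pow_dvd_factorial hp (by omega) hdvd
    · have hPtop : (stab ⊔ πh.ker : Subgroup G) = ⊤ := by
        have h1 := MulAction.stabilizer_orbit_eq
          (le_sup_left : stab ≤ stab ⊔ πh.ker)
        rw [huniv] at h1
        rw [← h1]
        ext g
        simp only [MulAction.mem_stabilizer_iff, Subgroup.mem_top, iff_true]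
        exact Set.smul_set_univ
      intro g
      have hg : g ∈ ((stab ⊔ πh.ker : Subgroup G) : Set G) := by
        rw [hPtop]
        exact Subgroup.mem_top g
      rw [Subgroup.mul_normal stab πh.ker] at hg
      obtain ⟨s, hs, b, hb, rfl⟩ := hg
      refine ⟨s, hs, ?_⟩
      have h1 : π (s * b) = π s * π b := hπmul s b
      have h2 : π b = 1 := MonoidHom.mem_ker.mp hb
      rw [h1, h2, mul_one]
  -- orbit membership
  have hOmem : ∀ γ, γ ∈ MulAction.orbit stab β ↔
      ∃ s : G, s ∈ stab ∧ (s : Equiv.Perm (Fin k → Δ)) β = γ := by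
    intro γ
    constructor
    · rintro ⟨⟨s, hs⟩, rfl⟩
      exact ⟨s, hs, rfl⟩
    · rintro ⟨s, hs, rfl⟩
      exact ⟨⟨s, hs⟩, rfl⟩
  have horbfin : (MulAction.orbit stab β).Finite := Set.toFinite _
  set OF : Finset (Fin k → Δ) := horbfin.toFinset with hOF
  have hTfin : ({J' : Finset (Fin k) |
      ∃ g ∈ G, ∃ (σ : Equiv.Perm (Fin k)) (f : Fin k → Equiv.Perm Δ),
        IsProductForm k H g σ f ∧ J' = J.image σ}).Finite := Set.toFinite _
  set TF : Finset (Finset (Fin k)) := hTfin.toFinset with hTF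
  have hTFcard : TF.card = ℓ := by
    rw [← horb, Nat.card_coe_set_eq, Set.ncard_eq_toFinset_card _ hTfin]
  have hTFmem : ∀ J', J' ∈ TF ↔ ∃ g : G, J' = J.image (π g) := by
    intro J'
    rw [hTF, Set.Finite.mem_toFinset]
    exact hTiff J'
  have hOsupp : ∀ γ ∈ OF, supp γ ∈ TF := by
    intro γ hγ
    rw [hOF, Set.Finite.mem_toFinset] at hγ
    obtain ⟨s, hs, rfl⟩ := (hOmem _).mp hγ
    rw [hTFmem, hsupp_smul s hs, hsuppβ]
    exact ⟨s, rfl⟩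
  -- fibers all have the same size
  have hcard_fiber : ∀ J' ∈ TF, (OF.filter (fun γ => supp γ = J')).card =
      (OF.filter (fun γ => supp γ = J)).card := by
    intro J' hJ'
    obtain ⟨g, rfl⟩ := (hTFmem J').mp hJ'
    obtain ⟨s, hs, hπs⟩ := claimB g
    have hsinv : (s⁻¹ : G) ∈ stab := inv_mem hs
    have hπsinv : π s⁻¹ = (π s)⁻¹ := by
      rw [← hπh, ← hπh, map_inv]
    have hOFstable : ∀ t : G, t ∈ stab → ∀ γ ∈ OF,
        (t : Equiv.Perm (Fin k → Δ)) γ ∈ OF := by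
      intro t ht γ hγ
      rw [hOF, Set.Finite.mem_toFinset] at hγ ⊢
      obtain ⟨u, hu, rfl⟩ := (hOmem _).mp hγ
      refine (hOmem _).mpr ⟨t * u, mul_mem ht hu, ?_⟩
      rw [Subgroup.coe_mul]
      rfl
    refine Finset.card_bij' (fun γ _ => (s : Equiv.Perm (Fin k → Δ))⁻¹ γ)
      (fun γ _ => (s : Equiv.Perm (Fin k → Δ)) γ) ?_ ?_ ?_ ?_
    · intro γ hγ
      rw [Finset.mem_filter] at hγ ⊢
      have h1 : ((s⁻¹ : G) : Equiv.Perm (Fin k → Δ)) = (s : Equiv.Perm (Fin k → Δ))⁻¹ := rfl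
      constructor
      · rw [← h1]
        exact hOFstable s⁻¹ hsinv γ hγ.1
      · rw [← h1, hsupp_smul s⁻¹ hsinv, hγ.2, hπsinv, ← hπs, image_perm_image_perm_inv]
    · intro γ hγ
      rw [Finset.mem_filter] at hγ ⊢
      exact ⟨hOFstable s hs γ hγ.1, by rw [hsupp_smul s hs, hγ.2, hπs]⟩
    · intro γ hγ
      simp
    · intro γ hγ
      simp
  have hsum : OF.card = ∑ J' ∈ TF, (OF.filter (fun γ => supp γ = J')).card :=
    Finset.card_eq_sum_card_fiberwise hOsupp
  rw [Finset.sum_congr rfl hcard_fiber, Finset.sum_const, smul_eq_mul] at hsum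
  have hNat : Nat.card (MulAction.orbit stab β) = OF.card := by
    rw [Nat.card_coe_set_eq, Set.ncard_eq_toFinset_card _ horbfin]
  rw [hNat, hsum, ← hTFcard]
  exact dvd_mul_right _ _

/-- Lemma 3.1(ii): let `G ≤ H wr S_k` be primitive in product action on `Δ^k`
(`k ≥ 2`) with primitive component `H`, and let `K ≤ S_k` be the image of `G` under
the natural projection.  If `K` has an orbit of length `ℓ` on the `r`-subsets of
`{1, …, k}` for some `r ≤ k`, then `G` has a subdegree divisible by `ℓ`. -/
theorem stmt19 {Δ : Type*} [Finite Δ] [Nontrivial Δ] (k : ℕ) (hk : 2 ≤ k)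
    (H : Subgroup (Equiv.Perm Δ)) (G : Subgroup (Equiv.Perm (Fin k → Δ)))
    (hGprim : IsPrimitiveAction G (Fin k → Δ))
    (hHprim : IsPrimitiveAction H Δ)
    (hprod : ∀ g ∈ G, ∃ (σ : Equiv.Perm (Fin k)) (f : Fin k → Equiv.Perm Δ),
      IsProductForm k H g σ f)
    (hcomp : ∀ h : Equiv.Perm Δ, h ∈ H ↔
      ∃ g ∈ G, ∃ (σ : Equiv.Perm (Fin k)) (f : Fin k → Equiv.Perm Δ),
        IsProductForm k H g σ f ∧ σ ⟨0, by omega⟩ = ⟨0, by omega⟩ ∧ f ⟨0, by omega⟩ = h)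
    (r : ℕ) (hr : r ≤ k) (ℓ : ℕ) (J : Finset (Fin k)) (hJ : J.card = r)
    (horb : Nat.card {J' : Finset (Fin k) |
      ∃ g ∈ G, ∃ (σ : Equiv.Perm (Fin k)) (f : Fin k → Equiv.Perm Δ),
        IsProductForm k H g σ f ∧ J' = J.image σ} = ℓ) :
    ∃ α β : Fin k → Δ,
      ℓ ∣ Nat.card (MulAction.orbit (MulAction.stabilizer G α) β) :=
  stmt19' k hk H G ⟨hGprim.1, hGprim.2⟩ hprod r hr ℓ J hJ horb
end
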